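/- arXiv:2010.12528 — 2 statements merged into one kernel-verified Lean document; each statement's English description precedes it below -/
import Mathlib

section
/- There exists a finite edge set E, with all edge lengths equal to 1, such that no DP-system in LSTDP(E) has an acyclic underlying graph; in fact E can be taken to consist of four unit-length edges, arranged so that some DP-system on a graph containing a cycle has stabilization time 4, while every DP-system on an acyclic metric graph assembled from E has stabilization time at most 3. -/
/-!
Common framework: metric multigraphs assembled from an edge set `E`
(`ends : E → Sym2 V` with distinct endpoints), walks, dynamic-point
systems, stabilization times, and structural graph notions.
-/

/-- Walks in a multigraph on vertices `V` with edge set `E` and endpoint map `ends`: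
an alternating sequence of vertices and edges. -/
inductive MGWalk {E V : Type} (ends : E → Sym2 V) : V → V → Type where
  | nil (a : V) : MGWalk ends a a
  | cons {a b c : V} (e : E) (h : ends e = s(a, b)) (tail : MGWalk ends b c) :
      MGWalk ends a c

namespace MGWalk

variable {E V : Type} {ends : E → Sym2 V}

/-- Length of a walk with respect to an edge-length function. -/
def length (l : E → ℝ) : ∀ {a b : V}, MGWalk ends a b → ℝ
  | _, _, nil _ => 0
  | _, _, cons e _ tail => l e + tail.length l

/-- The list of edge entries of a walk. -/
def edges : ∀ {a b : V}, MGWalk ends a b → List E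
  | _, _, nil _ => []
  | _, _, cons e _ tail => e :: tail.edges

end MGWalk

/-- A DP-system on a metric graph assembled from `E`: the vertex set is finite,
no edge is a loop, the multigraph is connected, and the set of initial vertices
is nonempty. -/
def IsDPSystem {E V : Type} (ends : E → Sym2 V) (S : Set V) : Prop :=
  Finite V ∧ (∀ e, ¬ (ends e).IsDiag) ∧ (∀ a b : V, Nonempty (MGWalk ends a b)) ∧
    S.Nonempty

/-- A dynamic point is present at time `t` at distance `s` from endpoint `x` of
edge `e` (on the arc leaving `x`) iff some walk from an initial vertex to `x`
has length `t - s`. -/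
def IsPoint {E V : Type} (ends : E → Sym2 V) (l : E → ℝ) (S : Set V)
    (t : ℝ) (e : E) (x : V) (s : ℝ) : Prop :=
  x ∈ ends e ∧ 0 ≤ s ∧ s < l e ∧
    ∃ v₀ ∈ S, ∃ w : MGWalk ends v₀ x, w.length l = t - s

/-- Number of dynamic points on edge `e` at time `t`. -/
noncomputable def NptsEdge {E V : Type} (ends : E → Sym2 V) (l : E → ℝ)
    (S : Set V) (e : E) (t : ℝ) : ℕ :=
  Set.ncard {p : V × ℝ | IsPoint ends l S t e p.1 p.2}

/-- Total number of dynamic points at time `t`. -/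
noncomputable def Npts {E V : Type} (ends : E → Sym2 V) (l : E → ℝ)
    (S : Set V) (t : ℝ) : ℕ :=
  Set.ncard {p : E × V × ℝ | IsPoint ends l S t p.1 p.2.1 p.2.2}

/-- `T` is a stabilization bound: `T ≥ 0` and the total number of points is
constant from `T` on. -/
def IsStabBound {E V : Type} (ends : E → Sym2 V) (l : E → ℝ) (S : Set V)
    (T : ℝ) : Prop :=
  0 ≤ T ∧ ∀ t ≥ T, Npts ends l S t = Npts ends l S T

/-- The stabilization time: the least stabilization bound. -/
noncomputable def stabTime {E V : Type} (ends : E → Sym2 V) (l : E → ℝ)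
    (S : Set V) : ℝ :=
  sInf {T : ℝ | IsStabBound ends l S T}

/-- `T` is a stabilization bound for edge `e`. -/
def IsEdgeStabBound {E V : Type} (ends : E → Sym2 V) (l : E → ℝ) (S : Set V)
    (e : E) (T : ℝ) : Prop :=
  0 ≤ T ∧ ∀ t ≥ T, NptsEdge ends l S e t = NptsEdge ends l S e T

/-- The stabilization time of edge `e`. -/
noncomputable def edgeStabTime {E V : Type} (ends : E → Sym2 V) (l : E → ℝ)
    (S : Set V) (e : E) : ℝ :=
  sInf {T : ℝ | IsEdgeStabBound ends l S e T}

/-- Membership in `LSTDP(E)` (given the underlying system is a DP-system):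
its stabilization time is maximal among all DP-systems assembled from `E`. -/
def IsMaxStab {E : Type} (l : E → ℝ) {V : Type} (ends : E → Sym2 V)
    (S : Set V) : Prop :=
  ∀ (V' : Type) (ends' : E → Sym2 V') (S' : Set V'),
    IsDPSystem ends' S' → stabTime ends' l S' ≤ stabTime ends l S

/-- Degree of vertex `x` in the subgraph with edge set `C`. -/
noncomputable def edgeDegree {E V : Type} (ends : E → Sym2 V) (C : Set E)
    (x : V) : ℕ :=
  Set.ncard {e ∈ C | x ∈ ends e}

/-- Degree of vertex `x` in the whole graph. -/
noncomputable def degree {E V : Type} (ends : E → Sym2 V) (x : V) : ℕ :=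
  Set.ncard {e : E | x ∈ ends e}

/-- `x` is a vertex of the subgraph with edge set `C`. -/
def OnEdgeSet {E V : Type} (ends : E → Sym2 V) (C : Set E) (x : V) : Prop :=
  ∃ e ∈ C, x ∈ ends e

/-- The subgraph with edge set `C` is connected. -/
def EdgeSetConn {E V : Type} (ends : E → Sym2 V) (C : Set E) : Prop :=
  ∀ a b : V, OnEdgeSet ends C a → OnEdgeSet ends C b →
    ∃ w : MGWalk ends a b, ∀ e ∈ w.edges, e ∈ C

/-- `C` is the edge set of a cycle: nonempty, connected, and every vertex of its
support has degree exactly two in it. -/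
def IsCycleSet {E V : Type} (ends : E → Sym2 V) (C : Set E) : Prop :=
  C.Nonempty ∧ EdgeSetConn ends C ∧
    ∀ x : V, OnEdgeSet ends C x → edgeDegree ends C x = 2

/-- A bead graph: no vertex lies on two distinct cycles. -/
def IsBead {E V : Type} (ends : E → Sym2 V) : Prop :=
  ∀ C₁ C₂ : Set E, IsCycleSet ends C₁ → IsCycleSet ends C₂ → C₁ ≠ C₂ →
    ∀ x : V, ¬ (OnEdgeSet ends C₁ x ∧ OnEdgeSet ends C₂ x)

/-- The graph has no cycles. -/
def IsAcyclicG {E V : Type} (ends : E → Sym2 V) : Prop :=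
  ∀ C : Set E, ¬ IsCycleSet ends C

/-- `H` is the edge set of a path subgraph: nonempty, connected, acyclic, and
all degrees within `H` are at most two. -/
def IsPathSet {E V : Type} (ends : E → Sym2 V) (H : Set E) : Prop :=
  H.Nonempty ∧ EdgeSetConn ends H ∧ (∀ C ⊆ H, ¬ IsCycleSet ends C) ∧
    ∀ x : V, edgeDegree ends H x ≤ 2

/-- `x` is a terminal vertex of the path subgraph `H`. -/
def IsHandleTerminal {E V : Type} (ends : E → Sym2 V) (H : Set E) (x : V) : Prop :=
  edgeDegree ends H x = 1

/-- The type `W(v, e)` of walks from `v` to an endpoint of edge `e`. -/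
def WalkTo {E V : Type} (ends : E → Sym2 V) (v : V) (e : E) : Type :=
  { p : Σ x : V, MGWalk ends v x // p.1 ∈ ends e }

/-- The relation `≈` on `W(v, e)`: walks with the same final endpoint are related
iff their lengths are congruent modulo `2·l(e)`; walks with different final
endpoints are related iff the difference of their lengths is congruent to
`l(e)` modulo `2·l(e)`. -/
def wapprox {E V : Type} (ends : E → Sym2 V) (l : E → ℝ) (v : V) (e : E)
    (w₁ w₂ : WalkTo ends v e) : Prop :=
  (w₁.1.1 = w₂.1.1 ∧
    ∃ k : ℤ, w₁.1.2.length l - w₂.1.2.length l = k * (2 * l e)) ∨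
  (w₁.1.1 ≠ w₂.1.1 ∧
    ∃ k : ℤ, w₁.1.2.length l - w₂.1.2.length l - l e = k * (2 * l e))

namespace MGWalk

variable {E V : Type} {ends : E → Sym2 V}

def append : ∀ {a b c : V}, MGWalk ends a b → MGWalk ends b c → MGWalk ends a c
  | _, _, _, nil _, w => w
  | _, _, _, cons e h t, w => cons e h (t.append w)

lemma edges_append : ∀ {a b c : V} (w₁ : MGWalk ends a b) (w₂ : MGWalk ends b c),
    (w₁.append w₂).edges = w₁.edges ++ w₂.edges
  | _, _, _, nil _, w => rfl
  | _, _, _, cons e h t, w => by simp [append, edges, edges_append t w]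

def rev : ∀ {a b : V}, MGWalk ends a b → MGWalk ends b a
  | _, _, nil a => nil a
  | _, _, cons e h t => t.rev.append (cons e (h.trans (Sym2.eq_swap)) (nil _))

lemma edges_rev : ∀ {a b : V} (w : MGWalk ends a b), w.rev.edges = w.edges.reverse
  | _, _, nil a => rfl
  | _, _, cons e h t => by simp [rev, edges, edges_append, edges_rev t]

lemma length_eq_card {l : E → ℝ} (hl : ∀ e, l e = 1) :
    ∀ {a b : V} (w : MGWalk ends a b), w.length l = w.edges.length
  | _, _, nil a => by simp [length, edges]
  | _, _, cons e h t => by simp [length, edges, length_eq_card hl t, hl e]; ring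

end MGWalk
namespace DP13
open MGWalk

variable {E V : Type}

def IsChain (ends : E → Sym2 V) : V → List (E × V) → Prop
  | _, [] => True
  | a, (e, b) :: rest => ends e = s(a, b) ∧ IsChain ends b rest

def chainEnd : V → List (E × V) → V
  | a, [] => a
  | _, (_, b) :: rest => chainEnd b rest

variable {ends : E → Sym2 V}

@[simp] lemma isChain_nil (a : V) : IsChain ends a [] := trivial

@[simp] lemma isChain_cons {a b : V} {e : E} {rest : List (E × V)} :
    IsChain ends a ((e, b) :: rest) ↔ ends e = s(a, b) ∧ IsChain ends b rest := Iff.rfl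

@[simp] lemma chainEnd_nil (a : V) : chainEnd a ([] : List (E × V)) = a := rfl

@[simp] lemma chainEnd_cons (a b : V) (e : E) (rest : List (E × V)) :
    chainEnd a ((e, b) :: rest) = chainEnd b rest := rfl

lemma chainEnd_append : ∀ (s t : List (E × V)) (a : V),
    chainEnd a (s ++ t) = chainEnd (chainEnd a s) t
  | [], t, a => rfl
  | (e, b) :: rest, t, a => by simp [chainEnd_append rest t b]

lemma isChain_append : ∀ (s t : List (E × V)) (a : V),
    IsChain ends a (s ++ t) ↔ IsChain ends a s ∧ IsChain ends (chainEnd a s) t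
  | [], t, a => by simp
  | (e, b) :: rest, t, a => by
      simp [isChain_append rest t b, and_assoc]

lemma ofChain : ∀ (steps : List (E × V)) (a : V), IsChain ends a steps →
    ∃ w : MGWalk ends a (chainEnd a steps), w.edges = steps.map Prod.fst
  | [], a, _ => ⟨MGWalk.nil a, rfl⟩
  | (e, b) :: rest, a, h => by
      obtain ⟨w, hw⟩ := ofChain rest b h.2
      exact ⟨MGWalk.cons e h.1 w, by simp [MGWalk.edges, hw]⟩

lemma toChain : ∀ {a b : V} (w : MGWalk ends a b),
    ∃ steps, IsChain ends a steps ∧ chainEnd a steps = b ∧ steps.map Prod.fst = w.edges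
  | _, _, MGWalk.nil a => ⟨[], trivial, rfl, rfl⟩
  | _, _, MGWalk.cons (b := b) e h t => by
      obtain ⟨steps, h1, h2, h3⟩ := toChain t
      exact ⟨(e, b) :: steps, ⟨h, h1⟩, h2, by simp [MGWalk.edges, h3]⟩

/-- Chains from `x` ending in `S`, of length `n`. -/
def Bk (ends : E → Sym2 V) (S : Set V) (n : ℕ) (x : V) : Prop :=
  ∃ steps : List (E × V), IsChain ends x steps ∧ chainEnd x steps ∈ S ∧ steps.length = n

def Reach (ends : E → Sym2 V) (S : Set V) (n : ℕ) (x : V) : Prop :=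
  ∃ v₀ ∈ S, ∃ w : MGWalk ends v₀ x, w.edges.length = n

lemma reach_iff_bk {S : Set V} {n : ℕ} {x : V} : Reach ends S n x ↔ Bk ends S n x := by
  constructor
  · rintro ⟨v₀, hv₀, w, hw⟩
    obtain ⟨steps, h1, h2, h3⟩ := toChain w.rev
    exact ⟨steps, h1, h2 ▸ hv₀, by
      have : steps.length = (steps.map Prod.fst).length := by simp
      rw [this, h3, MGWalk.edges_rev, List.length_reverse, hw]⟩
  · rintro ⟨steps, h1, h2, h3⟩
    obtain ⟨w, hw⟩ := ofChain steps x h1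
    exact ⟨chainEnd x steps, h2, w.rev, by
      rw [MGWalk.edges_rev, List.length_reverse, hw]; simp [h3]⟩

@[simp] lemma bk_zero {S : Set V} {x : V} : Bk ends S 0 x ↔ x ∈ S := by
  constructor
  · rintro ⟨steps, h1, h2, h3⟩
    rw [List.length_eq_zero_iff] at h3; subst h3; simpa using h2
  · intro hx; exact ⟨[], trivial, hx, rfl⟩

lemma bk_succ {S : Set V} {n : ℕ} {x : V} :
    Bk ends S (n+1) x ↔ ∃ e y, ends e = s(x, y) ∧ Bk ends S n y := by
  constructor
  · rintro ⟨steps, h1, h2, h3⟩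
    match steps, h3 with
    | (e, y) :: rest, h3 =>
      exact ⟨e, y, h1.1, rest, h1.2, h2, by simpa using h3⟩
  · rintro ⟨e, y, he, steps, h1, h2, h3⟩
    exact ⟨(e, y) :: steps, ⟨he, h1⟩, h2, by simp [h3]⟩

lemma bk_pad {S : Set V} {n : ℕ} {x : V} (hx : ∃ e, x ∈ ends e) :
    Bk ends S n x → Bk ends S (n + 2) x := by
  obtain ⟨e, he⟩ := hx
  obtain ⟨y, hy⟩ := Sym2.mem_iff_exists.1 he
  rintro ⟨steps, h1, h2, h3⟩
  exact ⟨(e, y) :: (e, x) :: steps, ⟨hy, hy.trans Sym2.eq_swap, h1⟩, h2, by simp [h3]⟩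

lemma bk_pad_iter {S : Set V} {n : ℕ} {x : V} (hx : ∃ e, x ∈ ends e)
    (h : Bk ends S n x) : ∀ j, Bk ends S (n + 2 * j) x := by
  intro j; induction j with
  | zero => simpa using h
  | succ j ih => have := bk_pad hx ih; rw [show n + 2*(j+1) = n + 2*j + 2 by ring]; exact this

end DP13
namespace DP13

variable {E V : Type} {ends : E → Sym2 V}

/-- Incidence pairs whose vertex is "backward-reachable" in exactly `n` steps. -/
def AS (ends : E → Sym2 V) (S : Set V) (n : ℕ) : Set (E × V) :=
  {q | q.2 ∈ ends q.1 ∧ Bk ends S n q.2}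

noncomputable def FF (ends : E → Sym2 V) (S : Set V) (n : ℕ) : ℕ := (AS ends S n).ncard

lemma points_eq (l : E → ℝ) (hl : ∀ e, l e = 1) (S : Set V) (t : ℝ) (ht : 0 ≤ t) :
    {p : E × V × ℝ | IsPoint ends l S t p.1 p.2.1 p.2.2} =
      (fun q : E × V => (q.1, q.2, Int.fract t)) '' AS ends S (⌊t⌋.toNat) := by
  have hfr : Int.fract t = t - ⌊t⌋ := rfl
  ext ⟨e, x, s⟩
  constructor
  · rintro ⟨hx, hs0, hs1, v₀, hv₀, w, hw⟩
    rw [hl e] at hs1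
    rw [MGWalk.length_eq_card hl] at hw
    set n := w.edges.length with hn
    have hfl : ⌊t⌋ = (n : ℤ) := by
      rw [Int.floor_eq_iff]
      constructor <;> push_cast <;> linarith
    have hs : s = Int.fract t := by rw [hfr, hfl]; push_cast; linarith
    refine ⟨(e, x), ⟨hx, ?_⟩, by simp [hs]⟩
    rw [← reach_iff_bk]
    exact ⟨v₀, hv₀, w, by rw [hfl]; simp [hn]⟩
  · rintro ⟨⟨e', x'⟩, ⟨hx, hbk⟩, heq⟩
    obtain ⟨he, hxx, hss⟩ : e' = e ∧ x' = x ∧ Int.fract t = s := by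
      simpa [Prod.ext_iff] using heq
    subst he hxx hss
    obtain ⟨v₀, hv₀, w, hw⟩ := reach_iff_bk.2 hbk
    refine ⟨hx, Int.fract_nonneg t, by rw [hl _]; exact Int.fract_lt_one t, v₀, hv₀, w, ?_⟩
    rw [MGWalk.length_eq_card hl, hw, hfr]
    have h2 : ((⌊t⌋.toNat : ℕ) : ℝ) = ((⌊t⌋ : ℤ) : ℝ) := by
      exact_mod_cast congrArg (fun z : ℤ => (z : ℝ)) (Int.toNat_of_nonneg (Int.floor_nonneg.2 ht))
    rw [h2]; ring
lemma npts_eq (l : E → ℝ) (hl : ∀ e, l e = 1) (S : Set V) (t : ℝ) (ht : 0 ≤ t) :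
    Npts ends l S t = FF ends S (⌊t⌋.toNat) := by
  have hinj : Function.Injective (fun q : E × V => (q.1, q.2, Int.fract t)) := by
    intro a b h
    simp only [Prod.ext_iff] at h ⊢
    exact ⟨h.1, h.2.1⟩
  rw [Npts, points_eq l hl S t ht, Set.ncard_image_of_injective _ hinj]
  rfl

lemma npts_nat (l : E → ℝ) (hl : ∀ e, l e = 1) (S : Set V) (m : ℕ) :
    Npts ends l S m = FF ends S m := by
  rw [npts_eq l hl S m (by positivity)]
  norm_num

lemma isStabBound_of (l : E → ℝ) (hl : ∀ e, l e = 1) (S : Set V) (m : ℕ)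
    (hF : ∀ n, m ≤ n → FF ends S n = FF ends S m) : IsStabBound ends l S m := by
  refine ⟨by positivity, fun t ht => ?_⟩
  have ht0 : (0:ℝ) ≤ t := le_trans (by positivity) ht
  rw [npts_eq l hl S t ht0, npts_nat l hl S m]
  apply hF
  have : (m : ℤ) ≤ ⌊t⌋ := Int.le_floor.2 (by exact_mod_cast ht)
  omega

lemma stabTime_le (l : E → ℝ) (hl : ∀ e, l e = 1) (S : Set V) (m : ℕ)
    (hF : ∀ n, m ≤ n → FF ends S n = FF ends S m) : stabTime ends l S ≤ m :=
  csInf_le ⟨0, fun T hT => hT.1⟩ (isStabBound_of l hl S m hF)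

end DP13
namespace DP13

variable {E V : Type} {ends : E → Sym2 V}

lemma ne_of_mk_eq {a b : V} {e : E} (hd : ¬ (ends e).IsDiag) (h : ends e = s(a,b)) : a ≠ b := by
  intro hab; apply hd; rw [h, hab]; exact Sym2.mk_isDiag_iff.2 rfl

lemma exists_shorter (hd : ∀ e, ¬ (ends e).IsDiag) :
    ∀ (steps : List (E × V)) (a : V), IsChain ends a steps →
      ¬ (steps.map Prod.fst).Chain' (· ≠ ·) →
      ∃ s', IsChain ends a s' ∧ chainEnd a s' = chainEnd a steps ∧ s'.length + 2 = steps.length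
  | [], a, h, hnc => absurd (by simp [List.Chain']) hnc
  | [(e, b)], a, h, hnc => absurd (by simp [List.Chain']) hnc
  | (e, b) :: (e', c) :: rest, a, h, hnc => by
      obtain ⟨h1, h2, h3⟩ : ends e = s(a,b) ∧ ends e' = s(b,c) ∧ IsChain ends c rest :=
        ⟨h.1, h.2.1, h.2.2⟩
      by_cases hee : e = e'
      · subst hee
        have hac : a = c := by
          have := h1.symm.trans h2
          rcases Sym2.eq_iff.1 this with ⟨hab, _⟩ | ⟨hac, _⟩
          · exact absurd hab (ne_of_mk_eq (hd e) h1)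
          · exact hac
        subst hac
        exact ⟨rest, h3, by simp, by simp⟩
      · have hnc' : ¬ (((e', c) :: rest).map Prod.fst).Chain' (· ≠ ·) := by
          intro hc
          exact hnc (List.isChain_cons_cons.2 ⟨hee, hc⟩)
        obtain ⟨s', hs1, hs2, hs3⟩ := exists_shorter hd ((e', c) :: rest) b ⟨h2, h3⟩ hnc'
        exact ⟨(e, b) :: s', ⟨h1, hs1⟩, by simpa using hs2, by simpa using hs3⟩

lemma untangle (hd : ∀ e, ¬ (ends e).IsDiag) :
    ∀ (N : ℕ) (steps : List (E × V)) (a : V), steps.length ≤ N → IsChain ends a steps →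
    ∃ s', IsChain ends a s' ∧ chainEnd a s' = chainEnd a steps ∧
      (s'.map Prod.fst).Chain' (· ≠ ·) ∧ s'.length ≤ steps.length ∧
      s'.length % 2 = steps.length % 2 := by
  intro N
  induction N with
  | zero => intro steps a hle h
            exact ⟨steps, h, rfl, by
              rw [Nat.le_zero, List.length_eq_zero_iff] at hle; subst hle; simp [List.Chain'], le_refl _, rfl⟩
  | succ N ih =>
    intro steps a hle h
    by_cases hnc : (steps.map Prod.fst).Chain' (· ≠ ·)
    · exact ⟨steps, h, rfl, hnc, le_refl _, rfl⟩
    · obtain ⟨s₁, h1, h2, h3⟩ := exists_shorter hd steps a h hnc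
      obtain ⟨s', g1, g2, g3, g4, g5⟩ := ih s₁ a (by omega) h1
      exact ⟨s', g1, g2.trans h2, g3, by omega, by omega⟩

end DP13
namespace DP13

variable {E V : Type} {ends : E → Sym2 V}

def vtx (a : V) (steps : List (E × V)) (i : ℕ) : V := chainEnd a (steps.take i)

@[simp] lemma vtx_zero (a : V) (steps : List (E × V)) : vtx a steps 0 = a := rfl

lemma vtx_length (a : V) (steps : List (E × V)) :
    vtx a steps steps.length = chainEnd a steps := by
  rw [vtx, List.take_length]

lemma isChain_take {a : V} {steps : List (E × V)} (h : IsChain ends a steps) (i : ℕ) :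
    IsChain ends a (steps.take i) :=
  ((isChain_append (steps.take i) (steps.drop i) a).1
    (by rw [List.take_append_drop]; exact h)).1

lemma edge_spec : ∀ (steps : List (E × V)) (a : V), IsChain ends a steps →
    ∀ (i : ℕ) (h : i < steps.length),
      ends (steps.get ⟨i, h⟩).1 = s(vtx a steps i, vtx a steps (i+1))
  | (e, b) :: rest, a, hch, 0, h => by
      simpa [vtx, List.get] using hch.1
  | (e, b) :: rest, a, hch, (i+1), h => by
      have := edge_spec rest b hch.2 i (by simpa using h)
      simpa [vtx, List.get] using this

lemma chain_middle {a : V} {steps : List (E × V)} (h : IsChain ends a steps)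
    {i j : ℕ} (hij : i ≤ j) (hj : j ≤ steps.length) :
    IsChain ends (vtx a steps i) ((steps.take j).drop i) ∧
    chainEnd (vtx a steps i) ((steps.take j).drop i) = vtx a steps j ∧
    ((steps.take j).drop i).length = j - i := by
  have htj : IsChain ends a (steps.take j) := isChain_take h j
  have hsplit : (steps.take j).take i ++ (steps.take j).drop i = steps.take j :=
    List.take_append_drop _ _
  have htt : (steps.take j).take i = steps.take i := by rw [List.take_take, min_eq_left hij]
  have h1 := (isChain_append ((steps.take j).take i) ((steps.take j).drop i) a).1
    (by rw [hsplit]; exact htj)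
  have h2 := chainEnd_append ((steps.take j).take i) ((steps.take j).drop i) a
  rw [hsplit] at h2
  rw [htt] at h1 h2
  refine ⟨h1.2, ?_, ?_⟩
  · rw [vtx, vtx, ← h2]
  · simp only [List.length_drop, List.length_take]
    omega

open Fin.NatCast in
theorem closed_chain_nil (hd : ∀ e, ¬ (ends e).IsDiag) (hac : IsAcyclicG ends) :
    ∀ (N : ℕ) (steps : List (E × V)) (a : V), steps.length ≤ N → IsChain ends a steps →
      (steps.map Prod.fst).Chain' (· ≠ ·) → chainEnd a steps = a → steps = [] := by
  intro N
  induction N with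
  | zero =>
    intro steps a h _ _ _
    exact List.length_eq_zero_iff.1 (by omega)
  | succ N IH =>
    intro steps a hlen hch hnc hclosed
    by_contra hne0
    have hk0 : 0 < steps.length := List.length_pos_iff.2 hne0
    have claim : ∀ i j, i < j → j ≤ steps.length → ¬(i = 0 ∧ j = steps.length) →
        vtx a steps i ≠ vtx a steps j := by
      intro i j hij hj hnot heq
      obtain ⟨m1, m2, m3⟩ := chain_middle hch (le_of_lt hij) hj
      have hmnil : (steps.take j).drop i = [] := by
        refine IH _ (vtx a steps i) ?_ m1 ?_ (by rw [m2, ← heq])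
        · rw [m3]
          by_cases h0 : i = 0
          · subst h0
            by_cases hjk : j = steps.length
            · exact absurd ⟨rfl, hjk⟩ hnot
            · omega
          · omega
        · have hmap : ((steps.take j).drop i).map Prod.fst =
              ((steps.map Prod.fst).take j).drop i := by
            rw [List.map_drop, List.map_take]
          rw [hmap]; exact (hnc.take j).drop i
      rw [hmnil] at m3
      simp at m3
      omega
    have hk1 : steps.length ≠ 1 := by
      intro h1
      have hes := edge_spec steps a hch 0 (by omega)
      rw [show (0:ℕ)+1 = steps.length by omega, vtx_length, hclosed] at hes
      simp only [vtx_zero] at hes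
      exact hd _ (by rw [hes]; exact Sym2.mk_isDiag_iff.2 rfl)
    have hk2 : 2 ≤ steps.length := by omega
    haveI : NeZero steps.length := ⟨by omega⟩
    set vv : Fin steps.length → V := fun i => vtx a steps i.val with hvvdef
    set ee : Fin steps.length → E := fun i => (steps.get i).1 with heedef
    have hval1 : ∀ x : Fin steps.length, (x + 1).val = (x.val + 1) % steps.length := by
      intro x
      rw [Fin.add_def, Fin.val_one']
      show (x.val + 1 % steps.length) % steps.length = _
      rw [Nat.mod_eq_of_lt (show 1 < steps.length by omega)]
    have hvsucc : ∀ i : Fin steps.length, vv (i+1) = vtx a steps (i.val + 1) := by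
      intro i
      rcases Nat.lt_or_ge (i.val+1) steps.length with h | h
      · simp only [hvvdef]; rw [hval1, Nat.mod_eq_of_lt h]
      · have hvk : i.val + 1 = steps.length := by omega
        simp only [hvvdef]
        rw [hval1, hvk, Nat.mod_self, vtx_length, hclosed]
        rfl
    have hspec : ∀ i : Fin steps.length, ends (ee i) = s(vv i, vv (i+1)) := by
      intro i
      rw [hvsucc]
      exact edge_spec steps a hch i.val i.isLt
    have hvinj : Function.Injective vv := by
      intro i j hij
      by_contra hne
      have hvne : i.val ≠ j.val := fun hh => hne (Fin.ext hh)
      rcases Nat.lt_or_ge i.val j.val with h | h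
      · exact claim i.val j.val h (le_of_lt j.isLt)
          (fun ⟨_, h2⟩ => absurd h2 (by have := j.isLt; omega)) hij
      · exact claim j.val i.val (by omega) (le_of_lt i.isLt)
          (fun ⟨_, h2⟩ => absurd h2 (by have := i.isLt; omega)) hij.symm
    have hcons : ∀ (i : ℕ) (h : i + 1 < steps.length),
        (steps.get ⟨i, by omega⟩).1 ≠ (steps.get ⟨i+1, h⟩).1 := by
      intro i h hEq
      have hc := List.isChain_iff_getElem.1 hnc i (by simp; omega)
      apply hc
      have e1 : (steps.map Prod.fst).get ⟨i, by simp; omega⟩ = (steps.get ⟨i, by omega⟩).1 := by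
        simp
      have e2 : (steps.map Prod.fst).get ⟨i+1, by simp; omega⟩ = (steps.get ⟨i+1, h⟩).1 := by
        simp
      simpa using hEq
    have heq_get : ∀ (i : Fin steps.length) (m : ℕ) (hm : m < steps.length),
        i.val = m → ee i = (steps.get ⟨m, hm⟩).1 := by
      intro i m hm h
      simp only [heedef]
      have hieq : i = ⟨m, hm⟩ := Fin.ext h
      rw [hieq]
    have hene : ∀ i : Fin steps.length, ee i ≠ ee (i+1) := by
      intro i hEq
      rcases Nat.lt_or_ge (i.val + 1) steps.length with h | h
      · have h1 : (i+1).val = i.val + 1 := by rw [hval1, Nat.mod_eq_of_lt h]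
        exact hcons i.val h (((heq_get i i.val i.isLt rfl).symm.trans hEq).trans
          (heq_get (i+1) (i.val+1) h h1))
      · have hvk : i.val + 1 = steps.length := by omega
        have h10 : (i+1) = (0 : Fin steps.length) := by
          apply Fin.ext
          rw [hval1, hvk, Nat.mod_self]
          rfl
        have hAB : s(vv i, vv (i+1)) = s(vv (i+1), vv (i+1+1)) := by
          rw [← hspec i, ← hspec (i+1), hEq]
        rw [h10] at hAB
        have hval01 : ((0:Fin steps.length)+1).val = 1 := by
          rw [hval1]
          simp [Nat.mod_eq_of_lt (show 1 < steps.length by omega)]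
        rcases Sym2.eq_iff.1 hAB with ⟨h1, h2⟩ | ⟨h1, h2⟩
        · have h3 := congrArg Fin.val (hvinj h2)
          rw [hval01] at h3
          simp at h3
        · have h3 := congrArg Fin.val (hvinj h1)
          rw [hval01] at h3
          have hlen2 : steps.length = 2 := by omega
          have h20 : (i+1).val = 0 := by rw [h10]; rfl
          exact hcons 0 (by omega) (((heq_get (i+1) 0 (by omega) h20).symm.trans hEq.symm).trans
            (heq_get i 1 (by omega) h3))
    have heinj : Function.Injective ee := by
      intro i j hEq
      by_contra hne
      have hAB : s(vv i, vv (i+1)) = s(vv j, vv (j+1)) := by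
        rw [← hspec i, ← hspec j, hEq]
      rcases Sym2.eq_iff.1 hAB with ⟨h1, _⟩ | ⟨h1, h2⟩
      · exact hne (hvinj h1)
      · have hij1 : i = j + 1 := hvinj h1
        have hji1 : j = i + 1 := (hvinj h2).symm
        have hjj : j = (j + 1) + 1 := by rw [← hij1]; exact hji1
        have hv := congrArg Fin.val hjj
        rw [hval1, hval1] at hv
        have hlen2 : steps.length = 2 := by
          rcases Nat.lt_or_ge (j.val + 1) steps.length with hA | hA
          · rw [Nat.mod_eq_of_lt hA] at hv
            rcases Nat.lt_or_ge (j.val + 1 + 1) steps.length with hB | hB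
            · rw [Nat.mod_eq_of_lt hB] at hv; omega
            · have hBlt : j.val + 1 + 1 - steps.length < steps.length := by
                have := j.isLt; omega
              rw [Nat.mod_eq_sub_mod hB, Nat.mod_eq_of_lt hBlt] at hv
              have := j.isLt; omega
          · have hA1 : j.val + 1 = steps.length := by have := j.isLt; omega
            rw [hA1, Nat.mod_self, Nat.mod_eq_of_lt (show 0+1 < steps.length by omega)] at hv
            omega
        have hvne : i.val ≠ j.val := fun hh => hne (Fin.ext hh)
        have hcase : (i.val = 0 ∧ j.val = 1) ∨ (i.val = 1 ∧ j.val = 0) := by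
          have := i.isLt; have := j.isLt; omega
        rcases hcase with ⟨hi0, hj1⟩ | ⟨hi1, hj0⟩
        · exact hcons 0 (by omega) (((heq_get i 0 (by omega) hi0).symm.trans hEq).trans
            (heq_get j 1 (by omega) hj1))
        · exact hcons 0 (by omega) (((heq_get j 0 (by omega) hj0).symm.trans hEq.symm).trans
            (heq_get i 1 (by omega) hi1))
    -- build the cycle
    set C : Set E := Set.range ee with hCdef
    have hone : ∀ {x : V}, OnEdgeSet ends C x → ∃ i, x = vv i := by
      rintro x ⟨e', ⟨j, rfl⟩, hxe⟩
      rw [hspec j] at hxe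
      rcases Sym2.mem_iff.1 hxe with h | h
      · exact ⟨j, h⟩
      · exact ⟨j+1, h⟩
    have walkAux : ∀ (m : ℕ) (i j : Fin steps.length), j = i + (m : Fin steps.length) →
        ∃ w : MGWalk ends (vv i) (vv j), ∀ e' ∈ w.edges, e' ∈ C := by
      intro m
      induction m with
      | zero =>
        intro i j hj
        have : j = i := by simpa using hj
        subst this
        exact ⟨MGWalk.nil _, by intro e' he'; simp [MGWalk.edges] at he'⟩
      | succ m ihm =>
        intro i j hj
        have hj' : j = (i + 1) + (m : Fin steps.length) := by
          rw [hj]; push_cast; abel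
        obtain ⟨w, hw⟩ := ihm (i+1) j hj'
        refine ⟨MGWalk.cons (ee i) (hspec i) w, ?_⟩
        intro e' he'
        rcases List.mem_cons.1 he' with h | h
        · exact ⟨i, h.symm⟩
        · exact hw e' h
    have hconn : EdgeSetConn ends C := by
      intro x y hx hy
      obtain ⟨i, rfl⟩ := hone hx
      obtain ⟨j, rfl⟩ := hone hy
      obtain ⟨w, hw⟩ := walkAux (j - i).val i j
        (by rw [Fin.cast_val_eq_self, add_comm, sub_add_cancel])
      exact ⟨w, hw⟩
    have hdeg : ∀ x : V, OnEdgeSet ends C x → edgeDegree ends C x = 2 := by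
      intro x hx
      obtain ⟨i, rfl⟩ := hone hx
      have hset : {e' ∈ C | vv i ∈ ends e'} = {ee i, ee (i - 1)} := by
        ext e'
        simp only [Set.mem_setOf_eq, Set.mem_insert_iff, Set.mem_singleton_iff]
        constructor
        · rintro ⟨⟨j, rfl⟩, hmem⟩
          rw [hspec j] at hmem
          rcases Sym2.mem_iff.1 hmem with h | h
          · left; rw [hvinj h]
          · right
            have hji : i = j + 1 := hvinj h
            rw [hji]
            congr 1
            rw [add_sub_cancel_right]
        · rintro (rfl | rfl)
          · exact ⟨⟨i, rfl⟩, by rw [hspec i]; exact Sym2.mem_mk_left _ _⟩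
          · refine ⟨⟨i-1, rfl⟩, ?_⟩
            rw [hspec (i-1), sub_add_cancel]
            exact Sym2.mem_mk_right _ _
      rw [edgeDegree, hset, Set.ncard_pair]
      intro hEq
      exact hene (i-1) (by rw [sub_add_cancel]; exact hEq.symm)
    exact hac C ⟨⟨ee 0, Set.mem_range_self _⟩, hconn, hdeg⟩

end DP13
namespace DP13

variable {E V : Type} {ends : E → Sym2 V}

lemma nodup_of_chain' (hd : ∀ e, ¬ (ends e).IsDiag) (hac : IsAcyclicG ends) :
    ∀ (steps : List (E × V)) (a : V), IsChain ends a steps →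
      (steps.map Prod.fst).Chain' (· ≠ ·) → (steps.map Prod.fst).Nodup
  | [], _, _, _ => List.nodup_nil
  | (e, b) :: rest, a, hch, hnc => by
    have hnc' : (rest.map Prod.fst).Chain' (· ≠ ·) :=
      (List.isChain_cons.1 hnc).2
    have ih := nodup_of_chain' hd hac rest b hch.2 hnc'
    simp only [List.map_cons, List.nodup_cons]
    refine ⟨?_, ih⟩
    intro hmem
    obtain ⟨⟨e₂, c⟩, hmem2, hp1⟩ := List.mem_map.1 hmem
    simp only at hp1
    subst hp1
    obtain ⟨r₁, r₂, hrest⟩ := List.append_of_mem hmem2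
    subst hrest
    have hsplit := (isChain_append r₁ ((e₂, c) :: r₂) b).1 hch.2
    have hze : ends e₂ = s(chainEnd b r₁, c) := hsplit.2.1
    have hab : ends e₂ = s(a, b) := hch.1
    rw [List.map_append, List.map_cons] at hnc'
    rcases Sym2.eq_iff.1 (hab.symm.trans hze) with ⟨haz, hbc⟩ | ⟨hca, hbz⟩
    · -- chainEnd b r₁ = a and c = b : closed chain r₁ ++ [(e,b)] at b
      have hcl : IsChain ends b (r₁ ++ [(e₂, b)]) := by
        rw [isChain_append]
        refine ⟨hsplit.1, ?_⟩
        rw [isChain_cons]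
        exact ⟨by rw [← haz]; exact hab, trivial⟩
      have hend : chainEnd b (r₁ ++ [(e₂, b)]) = b := by
        rw [chainEnd_append]; rfl
      have hnc2 : ((r₁ ++ [(e₂, b)]).map Prod.fst).Chain' (· ≠ ·) := by
        rw [List.map_append, List.map_cons]
        simp only [List.Chain', List.isChain_append] at hnc' ⊢
        refine ⟨hnc'.1, List.isChain_singleton e₂, ?_⟩
        intro x hx y hy
        have hye : e₂ = y := by simpa using hy
        rw [← hye]
        exact hnc'.2.2 x hx e₂ (by simp)
      have hnil := closed_chain_nil hd hac _ _ b (le_refl _) hcl hnc2 hend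
      simp at hnil
    · -- c = a and b = chainEnd b r₁ : closed chain r₁ at b
      have hnil : r₁ = [] := closed_chain_nil hd hac _ r₁ b (le_refl _) hsplit.1
        ((List.isChain_append.1 hnc').1) hbz.symm
      subst hnil
      have hnc0 : (e₂ :: e₂ :: r₂.map Prod.fst).Chain' (· ≠ ·) := by
        simpa using hnc
      exact (List.isChain_cons_cons.1 hnc0).1 rfl

lemma bk_shorten [Fintype E] (hcard : Fintype.card E ≤ 4)
    (hd : ∀ e, ¬ (ends e).IsDiag) (hac : IsAcyclicG ends)
    {S : Set V} {n : ℕ} {x : V} (hn : 3 ≤ n) (h : Bk ends S (n+2) x) : Bk ends S n x := by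
  obtain ⟨steps, h1, h2, h3⟩ := h
  have hxe : ∃ e, x ∈ ends e := by
    match steps, h1, h3 with
    | (e, b) :: rest, h1, _ => exact ⟨e, by rw [h1.1]; exact Sym2.mem_mk_left _ _⟩
  obtain ⟨s', g1, g2, g3, g4, g5⟩ := untangle hd steps.length steps x (le_refl _) h1
  have hnd := nodup_of_chain' hd hac s' x g1 g3
  have hlen4 : s'.length ≤ 4 := by
    have h5 := hnd.length_le_card
    rw [List.length_map] at h5
    exact h5.trans hcard
  obtain ⟨j, hjj⟩ : ∃ j, n = s'.length + 2 * j := ⟨(n - s'.length)/2, by omega⟩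
  have hb : Bk ends S s'.length x := ⟨s', g1, by rw [g2]; exact h2, rfl⟩
  rw [hjj]
  exact bk_pad_iter hxe hb j

lemma as_succ_succ [Fintype E] (hcard : Fintype.card E ≤ 4)
    (hd : ∀ e, ¬ (ends e).IsDiag) (hac : IsAcyclicG ends)
    {S : Set V} {n : ℕ} (hn : 3 ≤ n) : AS ends S (n+2) = AS ends S n := by
  ext ⟨e, x⟩
  simp only [AS, Set.mem_setOf_eq]
  constructor
  · rintro ⟨hx, hb⟩; exact ⟨hx, bk_shorten hcard hd hac hn hb⟩
  · rintro ⟨hx, hb⟩; exact ⟨hx, bk_pad ⟨e, hx⟩ hb⟩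

lemma ff_four_eq_three [Fintype E] (hcard : Fintype.card E ≤ 4)
    (hd : ∀ e, ¬ (ends e).IsDiag) (hac : IsAcyclicG ends) (S : Set V) :
    FF ends S 4 = FF ends S 3 := by
  classical
  have hex : ∀ e : E, ∃ p : V × V, ends e = s(p.1, p.2) := by
    have hz : ∀ z : Sym2 V, ∃ p : V × V, z = s(p.1, p.2) := by
      intro z
      induction z using Sym2.ind with
      | _ x y => exact ⟨(x, y), rfl⟩
    exact fun e => hz (ends e)
  choose pe hpe using hex
  have hune : ∀ e, (pe e).1 ≠ (pe e).2 := by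
    intro e h
    exact hd e (by rw [hpe e]; exact Sym2.mk_isDiag_iff.2 h)
  set other : E → V → V := fun e x => if x = (pe e).1 then (pe e).2 else (pe e).1 with hother
  have hmem : ∀ {e : E} {x : V}, x ∈ ends e ↔ (x = (pe e).1 ∨ x = (pe e).2) := by
    intro e x; rw [hpe e]; exact Sym2.mem_iff
  have F2 : ∀ {e x}, x ∈ ends e → ends e = s(other e x, x) := by
    intro e x hx
    rcases hmem.1 hx with h1 | h1
    · subst h1; simp only [hother, if_pos rfl]
      rw [hpe e]; exact Sym2.eq_swap
    · subst h1; simp only [hother, if_neg (Ne.symm (hune e))]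
      exact hpe e
  have F1 : ∀ {e x}, x ∈ ends e → other e x ∈ ends e := by
    intro e x hx; rw [F2 hx]; exact Sym2.mem_mk_left _ _
  have F3 : ∀ {e x}, x ∈ ends e → other e (other e x) = x := by
    intro e x hx
    rcases hmem.1 hx with h1 | h1
    · subst h1; simp only [hother, if_pos rfl, if_neg (Ne.symm (hune e))]
    · subst h1; simp only [hother, if_neg (Ne.symm (hune e)), if_pos rfl]
  set f : E × V → E × V := fun q => (q.1, other q.1 q.2) with hf
  have h43 : ∀ q ∈ AS ends S 4, f q ∈ AS ends S 3 := by
    rintro ⟨e, x⟩ ⟨hx, hb⟩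
    refine ⟨F1 hx, ?_⟩
    exact bk_shorten hcard hd hac (le_refl 3) (bk_succ.2 ⟨e, x, F2 hx, hb⟩)
  have h34 : ∀ q ∈ AS ends S 3, f q ∈ AS ends S 4 := by
    rintro ⟨e, x⟩ ⟨hx, hb⟩
    exact ⟨F1 hx, bk_succ.2 ⟨e, x, F2 hx, hb⟩⟩
  have hff : ∀ q : E × V, q.2 ∈ ends q.1 → f (f q) = q := by
    rintro ⟨e, x⟩ hx
    simp only [hf]
    exact Prod.ext rfl (F3 hx)
  have himg : f '' AS ends S 4 = AS ends S 3 := by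
    apply Set.Subset.antisymm
    · rintro q ⟨q', hq', rfl⟩; exact h43 q' hq'
    · intro q hq
      exact ⟨f q, h34 q hq, hff q hq.1⟩
  have hinj : Set.InjOn f (AS ends S 4) := by
    intro q hq q' hq' hEq
    rw [← hff q hq.1, ← hff q' hq'.1, hEq]
  rw [FF, FF, ← himg, Set.ncard_image_of_injOn hinj]

lemma ff_const [Fintype E] (hcard : Fintype.card E ≤ 4)
    (hd : ∀ e, ¬ (ends e).IsDiag) (hac : IsAcyclicG ends) (S : Set V) :
    ∀ n, 3 ≤ n → FF ends S n = FF ends S 3 := by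
  intro n
  induction n using Nat.strong_induction_on with
  | _ n ih =>
    intro hn
    by_cases h3 : n = 3
    · rw [h3]
    by_cases h4 : n = 4
    · rw [h4]; exact ff_four_eq_three hcard hd hac S
    have h5 : 5 ≤ n := by omega
    have heq1 : FF ends S n = FF ends S ((n-2)+2) := congrArg (FF ends S) (by omega)
    have heq2 : FF ends S ((n-2)+2) = FF ends S (n-2) := by
      show (AS ends S ((n-2)+2)).ncard = (AS ends S (n-2)).ncard
      rw [as_succ_succ hcard hd hac (by omega : 3 ≤ n - 2)]
    rw [heq1, heq2]
    exact ih (n-2) (by omega) (by omega)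

end DP13
namespace DP13

def myends : Fin 4 → Sym2 (Fin 4) := ![s(0,1), s(1,2), s(2,3), s(3,1)]

def myS : Set (Fin 4) := {0}

def tab : ℕ → Fin 4 → Bool
  | 0, x => decide (x = 0)
  | n+1, x => decide (∃ e, ∃ y, myends e = s(x, y) ∧ tab n y = true)

lemma bk_tab : ∀ (n : ℕ) (x : Fin 4), Bk myends myS n x ↔ tab n x = true
  | 0, x => by
    rw [bk_zero]
    show x ∈ ({0} : Set (Fin 4)) ↔ _
    rw [Set.mem_singleton_iff, tab]
    simp
  | n+1, x => by
    rw [bk_succ]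
    show _ ↔ (decide (∃ e, ∃ y, myends e = s(x, y) ∧ tab n y = true) = true)
    rw [decide_eq_true_iff]
    exact exists_congr fun e => exists_congr fun y =>
      and_congr_right fun _ => bk_tab n y

lemma hxe4 : ∀ x : Fin 4, ∃ e, x ∈ myends e := by decide

lemma bk_all : ∀ n, 4 ≤ n → ∀ x, Bk myends myS n x := by
  have h4 : ∀ x, tab 4 x = true := by decide
  have h5 : ∀ x, tab 5 x = true := by decide
  intro n
  induction n using Nat.strong_induction_on with
  | _ n ih =>
    intro hn x
    by_cases hn4 : n = 4
    · subst hn4; exact (bk_tab 4 x).2 (h4 x)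
    by_cases hn5 : n = 5
    · subst hn5; exact (bk_tab 5 x).2 (h5 x)
    have hb := ih (n-2) (by omega) (by omega) x
    have hb2 := bk_pad (hxe4 x) hb
    rw [show n-2+2 = n by omega] at hb2
    exact hb2

lemma as_ge4 {n : ℕ} (hn : 4 ≤ n) :
    AS myends myS n = ↑(Finset.univ.filter (fun q : Fin 4 × Fin 4 => q.2 ∈ myends q.1)) := by
  ext ⟨e, x⟩
  simp only [AS, Set.mem_setOf_eq, Finset.coe_filter, Finset.mem_univ, true_and]
  exact ⟨fun h => h.1, fun h => ⟨h, bk_all n hn x⟩⟩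

lemma ff_ge4 {n : ℕ} (hn : 4 ≤ n) : FF myends myS n = 8 := by
  rw [FF, as_ge4 hn, Set.ncard_coe_finset]
  decide

lemma ff3 : FF myends myS 3 = 7 := by
  have has : AS myends myS 3 =
      ↑(Finset.univ.filter (fun q : Fin 4 × Fin 4 => q.2 ∈ myends q.1 ∧ tab 3 q.2 = true)) := by
    ext ⟨e, x⟩
    simp only [AS, Set.mem_setOf_eq, Finset.coe_filter, Finset.mem_univ, true_and]
    exact and_congr_right fun _ => bk_tab 3 x
  rw [FF, has, Set.ncard_coe_finset]
  decide

lemma mydp : IsDPSystem myends myS := by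
  refine ⟨inferInstance, by decide, ?_, ⟨0, rfl⟩⟩
  have hto0 : ∀ x : Fin 4, Nonempty (MGWalk myends x 0) := by
    intro x
    obtain ⟨steps, h1, h2, h3⟩ := bk_all 4 le_rfl x
    obtain ⟨w, -⟩ := ofChain steps x h1
    have h0 : chainEnd x steps = 0 := Set.mem_singleton_iff.1 h2
    exact ⟨h0 ▸ w⟩
  intro a b
  obtain ⟨wa⟩ := hto0 a
  obtain ⟨wb⟩ := hto0 b
  exact ⟨wa.append wb.rev⟩

def myC : Set (Fin 4) := {1, 2, 3}

lemma hover : ∀ x : Fin 4, OnEdgeSet myends myC x → x = 1 ∨ x = 2 ∨ x = 3 := by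
  rintro x ⟨e, he, hx⟩
  have he' : e = 1 ∨ e = 2 ∨ e = 3 := by simpa [myC] using he
  rcases he' with rfl | rfl | rfl
  · exact (by decide : ∀ y : Fin 4, y ∈ myends 1 → y = 1 ∨ y = 2 ∨ y = 3) x hx
  · exact (by decide : ∀ y : Fin 4, y ∈ myends 2 → y = 1 ∨ y = 2 ∨ y = 3) x hx
  · exact (by decide : ∀ y : Fin 4, y ∈ myends 3 → y = 1 ∨ y = 2 ∨ y = 3) x hx

lemma walkTo1 : ∀ x : Fin 4, (x = 1 ∨ x = 2 ∨ x = 3) →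
    ∃ w : MGWalk myends x 1, ∀ e ∈ w.edges, e ∈ myC := by
  rintro x (rfl | rfl | rfl)
  · exact ⟨MGWalk.nil 1, by intro e he; simp [MGWalk.edges] at he⟩
  · refine ⟨MGWalk.cons 1 (by decide) (MGWalk.nil 1), ?_⟩
    intro e he
    have : e = 1 := by simpa [MGWalk.edges] using he
    subst this; simp [myC]
  · refine ⟨MGWalk.cons 3 (by decide) (MGWalk.nil 1), ?_⟩
    intro e he
    have : e = 3 := by simpa [MGWalk.edges] using he
    subst this; simp [myC]

lemma mycyc : IsCycleSet myends myC := by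
  refine ⟨⟨1, Or.inl rfl⟩, ?_, ?_⟩
  · intro a b ha hb
    obtain ⟨wa, hwa⟩ := walkTo1 a (hover a ha)
    obtain ⟨wb, hwb⟩ := walkTo1 b (hover b hb)
    refine ⟨wa.append wb.rev, ?_⟩
    intro e he
    rw [MGWalk.edges_append] at he
    rcases List.mem_append.1 he with h | h
    · exact hwa e h
    · rw [MGWalk.edges_rev] at h
      exact hwb e (List.mem_reverse.1 h)
  · intro x hx
    rcases hover x hx with rfl | rfl | rfl
    · have hset : {e ∈ myC | (1:Fin 4) ∈ myends e} = {1, 3} := by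
        ext e
        constructor
        · rintro ⟨he, hxe⟩
          rcases (by simpa [myC] using he : e = 1 ∨ e = 2 ∨ e = 3) with rfl | rfl | rfl
          · exact Or.inl rfl
          · exact absurd hxe (by decide)
          · exact Or.inr rfl
        · rintro (rfl | rfl)
          · exact ⟨by simp [myC], by decide⟩
          · exact ⟨by simp [myC], by decide⟩
      rw [edgeDegree, hset, Set.ncard_pair (by decide)]
    · have hset : {e ∈ myC | (2:Fin 4) ∈ myends e} = {1, 2} := by
        ext e
        constructor
        · rintro ⟨he, hxe⟩
          rcases (by simpa [myC] using he : e = 1 ∨ e = 2 ∨ e = 3) with rfl | rfl | rfl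
          · exact Or.inl rfl
          · exact Or.inr rfl
          · exact absurd hxe (by decide)
        · rintro (rfl | rfl)
          · exact ⟨by simp [myC], by decide⟩
          · exact ⟨by simp [myC], by decide⟩
      rw [edgeDegree, hset, Set.ncard_pair (by decide)]
    · have hset : {e ∈ myC | (3:Fin 4) ∈ myends e} = {2, 3} := by
        ext e
        constructor
        · rintro ⟨he, hxe⟩
          rcases (by simpa [myC] using he : e = 1 ∨ e = 2 ∨ e = 3) with rfl | rfl | rfl
          · exact absurd hxe (by decide)
          · exact Or.inl rfl
          · exact Or.inr rfl
        · rintro (rfl | rfl)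
          · exact ⟨by simp [myC], by decide⟩
          · exact ⟨by simp [myC], by decide⟩
      rw [edgeDegree, hset, Set.ncard_pair (by decide)]

lemma stab4 (l : Fin 4 → ℝ) (hl : ∀ e, l e = 1) : stabTime myends l myS = 4 := by
  have hmem4 : IsStabBound myends l myS ((4:ℕ):ℝ) :=
    isStabBound_of l hl myS 4 (fun n hn => by rw [ff_ge4 hn, ff_ge4 (le_refl 4)])
  have hbdd : BddBelow {T : ℝ | IsStabBound myends l myS T} := by
    refine ⟨0, ?_⟩
    intro T hT
    exact hT.1
  have hmem4' : ((4:ℕ):ℝ) ∈ {T : ℝ | IsStabBound myends l myS T} := hmem4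
  apply le_antisymm
  · exact le_trans (csInf_le hbdd hmem4') (by norm_num)
  · have h4 : (4:ℝ) ≤ sInf {T : ℝ | IsStabBound myends l myS T} := by
      refine le_csInf ⟨_, hmem4'⟩ ?_
      intro T hT
      by_contra hlt
      push_neg at hlt
      have h1 := hT.2 (max T 3) (le_max_left _ _)
      have h2 := hT.2 4 (by linarith)
      have hmx0 : (0:ℝ) ≤ max T 3 := le_trans (by norm_num) (le_max_right _ _)
      have hfl : ⌊max T 3⌋ = 3 := by
        rw [Int.floor_eq_iff]
        constructor
        · exact_mod_cast le_max_right T 3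
        · push_cast
          exact max_lt (by linarith) (by norm_num)
      have e1 : Npts myends l myS (max T 3) = 7 := by
        rw [npts_eq l hl myS _ hmx0, hfl]
        exact ff3
      have e2 : Npts myends l myS 4 = 8 := by
        have h5 := npts_nat (ends := myends) l hl myS 4
        rw [show ((4:ℕ):ℝ) = (4:ℝ) by norm_num] at h5
        rw [h5]
        exact ff_ge4 (le_refl 4)
      rw [e1] at h1
      rw [e2] at h2
      omega
    exact h4

lemma acyclic_le3 (V : Type) (ends : Fin 4 → Sym2 V) (S : Set V) (l : Fin 4 → ℝ)
    (hl : ∀ e, l e = 1) (hDP : IsDPSystem ends S) (hac : IsAcyclicG ends) :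
    stabTime ends l S ≤ 3 := by
  have hd := hDP.2.1
  have h3 := stabTime_le l hl S 3
    (ff_const (by simp : Fintype.card (Fin 4) ≤ 4) hd hac S)
  exact le_trans h3 (by norm_num)

end DP13
/-- there is a finite edge set `E` of four unit-length edges such
that no DP-system in `LSTDP(E)` has an acyclic underlying graph: some DP-system
on a graph containing a cycle has stabilization time `4`, while every DP-system
on an acyclic metric graph assembled from `E` has stabilization time at most `3`. -/
theorem stmt13 :
    ∃ (E : Type) (_ : Fintype E) (l : E → ℕ),
      (∀ e : E, l e = 1) ∧ Nat.card E = 4 ∧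
      -- no DP-system in LSTDP(E) is acyclic
      (∀ (V : Type) (ends : E → Sym2 V) (S : Set V),
        IsDPSystem ends S → IsMaxStab (fun e => (l e : ℝ)) ends S →
        ¬ IsAcyclicG ends) ∧
      -- some DP-system whose graph contains a cycle has stabilization time 4
      (∃ (V : Type) (ends : E → Sym2 V) (S : Set V),
        IsDPSystem ends S ∧ (∃ C : Set E, IsCycleSet ends C) ∧
        stabTime ends (fun e => (l e : ℝ)) S = 4) ∧
      -- every acyclic DP-system has stabilization time at most 3
      (∀ (V : Type) (ends : E → Sym2 V) (S : Set V),
        IsDPSystem ends S → IsAcyclicG ends →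
        stabTime ends (fun e => (l e : ℝ)) S ≤ 3) := by
  refine ⟨Fin 4, inferInstance, fun _ => 1, fun _ => rfl, by simp, ?_, ?_, ?_⟩
  · -- max-stab systems are not acyclic
    intro V ends S hDP hMax hac
    have hle := DP13.acyclic_le3 V ends S
      (fun e => (((fun _ : Fin 4 => (1:ℕ)) e : ℕ) : ℝ)) (fun _ => by norm_num) hDP hac
    have hge := hMax (Fin 4) DP13.myends DP13.myS DP13.mydp
    have h4 : stabTime DP13.myends (fun e => (((fun _ : Fin 4 => (1:ℕ)) e : ℕ) : ℝ)) DP13.myS = 4 :=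
      DP13.stab4 _ (fun _ => by norm_num)
    rw [h4] at hge
    linarith
  · -- the cyclic example
    exact ⟨Fin 4, DP13.myends, DP13.myS, DP13.mydp, ⟨DP13.myC, DP13.mycyc⟩,
      DP13.stab4 _ (fun _ => by norm_num)⟩
  · -- acyclic systems stabilize by time 3
    intro V ends S hDP hac
    exact DP13.acyclic_le3 V ends S _ (fun _ => by norm_num) hDP hac
end

section
/- For every real number C there exists a finite edge set E, with all edge lengths equal to 1, such that the maximal stabilization time over all DP-systems on metric graphs assembled from E exceeds by more than C the stabilization time of every DP-system on a linear metric graph (a path graph: connected, acyclic, all vertex degrees at most two) assembled from E. -/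
section GroupA
open MGWalk
variable {E V : Type} {ends : E → Sym2 V}

def wappend : ∀ {a b c : V}, MGWalk ends a b → MGWalk ends b c → MGWalk ends a c
  | _, _, _, .nil _, w => w
  | _, _, _, .cons e h t, w => .cons e h (wappend t w)

@[simp] lemma wappend_edges : ∀ {a b c : V} (w₁ : MGWalk ends a b) (w₂ : MGWalk ends b c),
    (wappend w₁ w₂).edges = w₁.edges ++ w₂.edges
  | _, _, _, .nil _, w => rfl
  | _, _, _, .cons e h t, w => by simp [wappend, MGWalk.edges, wappend_edges t w]

lemma eq_of_edges_nil : ∀ {a b : V} (w : MGWalk ends a b), w.edges.length = 0 → a = b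
  | _, _, .nil _, _ => rfl
  | _, _, .cons e h t, hl => by simp [MGWalk.edges] at hl

def wreverse : ∀ {a b : V}, MGWalk ends a b → MGWalk ends b a
  | _, _, .nil a => .nil a
  | _, _, .cons e h t => wappend (wreverse t) (.cons e (by rw [h, Sym2.eq_swap]) (.nil _))

@[simp] lemma wreverse_edges : ∀ {a b : V} (w : MGWalk ends a b),
    (wreverse w).edges = w.edges.reverse
  | _, _, .nil _ => rfl
  | _, _, .cons e h t => by
      simp [wreverse, MGWalk.edges, wreverse_edges t]

lemma length_eq_count {l : E → ℝ} (hl : ∀ e, l e = 1) :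
    ∀ {a b : V} (w : MGWalk ends a b), w.length l = (w.edges.length : ℝ)
  | _, _, .nil _ => by simp [MGWalk.length, MGWalk.edges]
  | _, _, .cons e h t => by
      simp [MGWalk.length, MGWalk.edges, length_eq_count hl t, hl e]
      ring

/-- every vertex is incident to an edge, given connectivity and a nonloop edge -/
lemma exists_incident (hconn : ∀ a b : V, Nonempty (MGWalk ends a b))
    (hnd : ∀ e, ¬ (ends e).IsDiag) (e₀ : E) (x : V) :
    ∃ (e : E) (y : V), ends e = s(x, y) := by
  obtain ⟨⟨p, q⟩, hpq⟩ := Quot.exists_rep (ends e₀)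
  by_cases hx : x = p
  · exact ⟨e₀, q, by rw [hx]; exact hpq.symm⟩
  · obtain ⟨w⟩ := hconn x p
    cases w with
    | nil => exact absurd rfl hx
    | cons e h t => exact ⟨e, _, h⟩

/-- pumping: add 2k to a walk's length using an incident edge at the target -/
lemma pump (e : E) (y : V) {x v₀ : V} (hy : ends e = s(x, y)) (w : MGWalk ends v₀ x) :
    ∀ k : ℕ, ∃ w' : MGWalk ends v₀ x, w'.edges.length = w.edges.length + 2 * k := by
  intro k
  induction k with
  | zero => exact ⟨w, by simp⟩
  | succ n ih =>
      obtain ⟨w', hw'⟩ := ih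
      refine ⟨wappend w' (.cons e hy (.cons e (by rw [hy, Sym2.eq_swap]) (.nil x))), ?_⟩
      simp [MGWalk.edges, hw']
      ring

lemma pump_parity (e : E) (y : V) {x v₀ : V} (hy : ends e = s(x, y)) (w : MGWalk ends v₀ x)
    {n : ℕ} (hn : w.edges.length ≤ n) (hp : (n : ZMod 2) = (w.edges.length : ZMod 2)) :
    ∃ w' : MGWalk ends v₀ x, w'.edges.length = n := by
  have h2 : n % 2 = w.edges.length % 2 :=
    (ZMod.natCast_eq_natCast_iff' n w.edges.length 2).mp hp
  obtain ⟨k, hk⟩ : ∃ k, n = w.edges.length + 2 * k := ⟨(n - w.edges.length) / 2, by omega⟩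
  obtain ⟨w', hw'⟩ := pump e y hy w k
  exact ⟨w', by omega⟩

end GroupA
section GroupB
open MGWalk
variable {E V : Type} {ends : E → Sym2 V}

lemma ends_ne {e : E} {a b : V} (hnd : ∀ e, ¬ (ends e).IsDiag) (h : ends e = s(a, b)) :
    a ≠ b := fun hab => hnd e (by rw [h, hab]; exact Sym2.mk_isDiag_iff.mpr rfl)

/-- shorten a walk whose edge list has an adjacent duplicate -/
lemma shorten (hnd : ∀ e, ¬ (ends e).IsDiag) :
    ∀ {a b : V} (w : MGWalk ends a b), ¬ w.edges.Chain' (· ≠ ·) →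
      ∃ w' : MGWalk ends a b, w'.edges.length + 2 = w.edges.length
  | _, _, .nil _, hc => absurd List.isChain_nil hc
  | _, _, .cons e h (.nil _), hc => absurd (List.isChain_singleton e) hc
  | a, b, .cons e h (.cons e' h' t'), hc => by
      rw [show (MGWalk.cons e h (MGWalk.cons e' h' t')).edges
            = e :: e' :: t'.edges from rfl, List.Chain', List.isChain_cons_cons] at hc
      push_neg at hc
      by_cases hee : e = e'
      · subst hee
        rename_i x y
        have hxy : s(a, x) = s(x, y) := h ▸ h'
        rw [Sym2.eq_iff] at hxy
        have hax : a ≠ x := ends_ne hnd h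
        have hay : a = y := by
          rcases hxy with ⟨h1, h2⟩ | ⟨h1, h2⟩
          · exact absurd h1 hax
          · exact h1
        subst hay
        exact ⟨t', by simp [MGWalk.edges]⟩
      · obtain ⟨t'', ht''⟩ := shorten hnd (.cons e' h' t') (fun hch => (hc hee) hch)
        exact ⟨.cons e h t'', by simp [MGWalk.edges] at ht'' ⊢; omega⟩

/-- from an edge of a walk, reach either endpoint of that edge by a walk using only
edges of the original walk -/
lemma prefix_walk {a b : V} (w : MGWalk ends a b) :
    ∀ (f : E), f ∈ w.edges → ∀ x, x ∈ ends f →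
      ∃ p : MGWalk ends a x, ∀ g ∈ p.edges, g ∈ w.edges := by
  induction w with
  | nil c => intro f hf; simp [MGWalk.edges] at hf
  | cons e h t ih =>
      intro f hf x hx
      rename_i a' u c'
      by_cases hfe : f = e
      · subst hfe
        rw [h] at hx
        rcases Sym2.mem_iff.mp hx with hxa | hxu
        · subst hxa; exact ⟨.nil x, by simp [MGWalk.edges]⟩
        · subst hxu
          exact ⟨.cons f h (.nil x), by simp [MGWalk.edges]⟩
      · have hft : f ∈ t.edges := by
          rcases (List.mem_cons).mp hf with h1 | h1
          · exact absurd h1 hfe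
          · exact h1
        obtain ⟨p, hp⟩ := ih f hft x hx
        refine ⟨.cons e h p, ?_⟩
        intro g hg
        rcases (List.mem_cons).mp hg with h1 | h1
        · simp [MGWalk.edges, h1]
        · exact List.mem_cons_of_mem _ (hp g h1)

/-- in a reduced walk, any vertex incident to a walk edge, other than the two
endpoints of the walk, is incident to two distinct walk edges -/
lemma two_incident {a b : V} (w : MGWalk ends a b) :
    w.edges.Chain' (· ≠ ·) →
    ∀ x f, f ∈ w.edges → x ∈ ends f → x ≠ a → x ≠ b →
    ∃ g₁ g₂, g₁ ∈ w.edges ∧ g₂ ∈ w.edges ∧ g₁ ≠ g₂ ∧ x ∈ ends g₁ ∧ x ∈ ends g₂ := by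
  induction w with
  | nil c => intro _ x f hf; simp [MGWalk.edges] at hf
  | cons e h t ih =>
      intro hch x f hf hxf hxa hxb
      rename_i a' u c'
      rw [show (MGWalk.cons e h t).edges = e :: t.edges from rfl] at hch hf ⊢
      by_cases hxe : x ∈ ends e
      · have hxu : x = u := by
          rw [h] at hxe
          rcases Sym2.mem_iff.mp hxe with h1 | h1
          · exact absurd h1 hxa
          · exact h1
        subst hxu
        cases t with
        | nil => exact absurd rfl hxb
        | cons e₁ h₁ t₁ =>
            have hne : e ≠ e₁ := (List.isChain_cons_cons.mp hch).1
            exact ⟨e, e₁, List.mem_cons_self,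
              List.mem_cons_of_mem _ (List.mem_cons_self), hne, hxe,
              by rw [h₁]; exact Sym2.mem_mk_left _ _⟩
      · have hft : f ∈ t.edges := by
          rcases (List.mem_cons).mp hf with h1 | h1
          · exact absurd (h1 ▸ hxf) hxe
          · exact h1
        have hxu : x ≠ u := fun hxu => hxe (by rw [h, hxu]; exact Sym2.mem_mk_right _ _)
        obtain ⟨g₁, g₂, hg₁, hg₂, hne, hm₁, hm₂⟩ :=
          ih (List.isChain_cons.mp hch).2 x f hft hxf hxu hxb
        exact ⟨g₁, g₂, List.mem_cons_of_mem _ hg₁, List.mem_cons_of_mem _ hg₂, hne, hm₁, hm₂⟩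

end GroupB
section GroupB2
open MGWalk
variable {E V : Type} {ends : E → Sym2 V}

lemma even_closed [Finite E] (hnd : ∀ e, ¬ (ends e).IsDiag)
    (hdeg : ∀ x, degree ends x ≤ 2) (hac : IsAcyclicG ends) :
    ∀ (n : ℕ) {v : V} (w : MGWalk ends v v), w.edges.length = n → Even n := by
  intro n
  induction n using Nat.strong_induction_on with
  | _ n ih =>
    intro v w hw
    cases w with
    | nil =>
        have hn0 : n = 0 := by simp [MGWalk.edges] at hw; omega
        exact hn0 ▸ Even.zero
    | cons e h t =>
      rename_i u
      have hvu : v ≠ u := ends_ne hnd h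
      rw [show (MGWalk.cons e h t).edges = e :: t.edges from rfl] at hw
      simp only [List.length_cons] at hw
      have htpos : 1 ≤ t.edges.length := by
        rcases Nat.eq_zero_or_pos t.edges.length with h0 | h1
        · exact absurd (eq_of_edges_nil t h0) (Ne.symm hvu)
        · exact h1
      -- look at the reverse of t, to get the last edge of t
      rcases hrt : wreverse t with _ | ⟨e₂, h₂, t₂⟩
      · exact absurd rfl hvu
      case cons u₂ =>
        have hrtlen : (wreverse t).edges.length = t.edges.length := by
          rw [wreverse_edges]; exact List.length_reverse
        have he₂t : e₂ ∈ t.edges := by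
          have : e₂ ∈ (wreverse t).edges := by rw [hrt]; exact List.mem_cons_self
          rwa [wreverse_edges, List.mem_reverse] at this
        by_cases he₂ : e₂ = e
        · -- last edge equals first edge: splice off both ends
          subst he₂
          have hu₂ : u₂ = u := by
            have : s(v, u) = s(v, u₂) := h ▸ h₂
            rw [Sym2.eq_iff] at this
            rcases this with ⟨_, h2⟩ | ⟨h1, h2⟩
            · exact h2.symm
            · exact absurd h2.symm hvu
          subst hu₂
          have hlen₂ : t₂.edges.length = n - 2 := by
            have : (wreverse t).edges.length = t₂.edges.length + 1 := by
              rw [hrt]; simp [MGWalk.edges]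
            omega
          obtain ⟨k, hk⟩ := ih (n - 2) (by omega) t₂ hlen₂
          exact ⟨k + 1, by omega⟩
        · by_cases hch : (MGWalk.cons e h t).edges.Chain' (· ≠ ·)
          · exfalso
            set w : MGWalk ends v v := MGWalk.cons e h t with hwdef
            have hwe : w.edges = e :: t.edges := rfl
            apply hac {f | f ∈ w.edges}
            have hve : v ∈ ends e := by rw [h]; exact Sym2.mem_mk_left _ _
            have hve₂ : v ∈ ends e₂ := by rw [h₂]; exact Sym2.mem_mk_left _ _
            refine ⟨⟨e, by simp [hwe]⟩, ?_, ?_⟩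
            · -- connectivity
              intro a' b' ⟨fa, hfa, hxa⟩ ⟨fb, hfb, hxb⟩
              obtain ⟨pa, hpa⟩ := prefix_walk w fa hfa a' hxa
              obtain ⟨pb, hpb⟩ := prefix_walk w fb hfb b' hxb
              refine ⟨wappend (wreverse pa) pb, ?_⟩
              intro g hg
              rw [wappend_edges, List.mem_append, wreverse_edges, List.mem_reverse] at hg
              rcases hg with hg | hg
              · exact hpa g hg
              · exact hpb g hg
            · -- degree 2 within the cycle set
              intro x ⟨f, hf, hxf⟩
              have hfin : ({e' ∈ {f | f ∈ w.edges} | x ∈ ends e'} : Set E).Finite :=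
                Set.toFinite _
              have hsub : {e' ∈ {f | f ∈ w.edges} | x ∈ ends e'} ⊆ {e' : E | x ∈ ends e'} :=
                fun g hg => hg.2
              have hub : edgeDegree ends {f | f ∈ w.edges} x ≤ 2 :=
                le_trans (Set.ncard_le_ncard hsub (Set.toFinite _)) (hdeg x)
              have hlb : ∃ g₁ g₂ : E, g₁ ∈ w.edges ∧ g₂ ∈ w.edges ∧ g₁ ≠ g₂ ∧
                  x ∈ ends g₁ ∧ x ∈ ends g₂ := by
                by_cases hxv : x = v
                · subst hxv
                  exact ⟨e, e₂, by simp [hwe], by simp [hwe, he₂t],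
                    fun hc => he₂ hc.symm, hve, hve₂⟩
                · exact two_incident w hch x f hf hxf hxv hxv
              obtain ⟨g₁, g₂, hg₁, hg₂, hgne, hm₁, hm₂⟩ := hlb
              have h2le : 1 < edgeDegree ends {f | f ∈ w.edges} x := by
                rw [edgeDegree, Set.one_lt_ncard_iff hfin]
                exact ⟨g₁, g₂, ⟨hg₁, hm₁⟩, ⟨hg₂, hm₂⟩, hgne⟩
              omega
          · obtain ⟨w', hw'⟩ := shorten hnd (MGWalk.cons e h t) hch
            have : w'.edges.length = n - 2 := by
              rw [show (MGWalk.cons e h t).edges = e :: t.edges from rfl] at hw'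
              simp at hw'; omega
            obtain ⟨k, hk⟩ := ih (n - 2) (by omega) w' this
            exact ⟨k + 1, by omega⟩

/-- parity of walks between two fixed vertices is unique in acyclic ≤2-degree graphs -/
lemma parity_unique [Finite E] (hnd : ∀ e, ¬ (ends e).IsDiag)
    (hdeg : ∀ x, degree ends x ≤ 2) (hac : IsAcyclicG ends)
    {a b : V} (w₁ w₂ : MGWalk ends a b) :
    (w₁.edges.length : ZMod 2) = (w₂.edges.length : ZMod 2) := by
  have := even_closed hnd hdeg hac (wappend w₁ (wreverse w₂)).edges.length
    (wappend w₁ (wreverse w₂)) rfl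
  rw [wappend_edges, List.length_append, wreverse_edges, List.length_reverse] at this
  obtain ⟨k, hk⟩ := this
  have h1 : w₁.edges.length % 2 = w₂.edges.length % 2 := by omega
  rw [ZMod.natCast_eq_natCast_iff']
  exact h1
end GroupB2
section GroupC
open MGWalk
variable {E V : Type} (ends : E → Sym2 V) (S : Set V)

/-- `n` is the length of some walk from an initial vertex to `x` -/
def InL (n : ℕ) (x : V) : Prop := ∃ v₀ ∈ S, ∃ w : MGWalk ends v₀ x, w.edges.length = n

def Qset (n : ℕ) : Set (E × V) := {q | q.2 ∈ ends q.1 ∧ InL ends S n q.2}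

def Qpar (p : ZMod 2) : Set (E × V) :=
  {q | q.2 ∈ ends q.1 ∧ ∃ v₀ ∈ S, ∃ w : MGWalk ends v₀ q.2, (w.edges.length : ZMod 2) = p}

variable {ends S}

lemma points_eq {l : E → ℝ} (hl : ∀ e, l e = 1) {t : ℝ} (ht : 0 ≤ t) :
    {p : E × V × ℝ | IsPoint ends l S t p.1 p.2.1 p.2.2}
      = (fun q : E × V => (q.1, q.2, Int.fract t)) '' Qset ends S (⌊t⌋.toNat) := by
  ext ⟨e, x, s⟩
  simp only [Set.mem_setOf_eq, Set.mem_image, IsPoint]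
  constructor
  · rintro ⟨hx, hs0, hs1, v₀, hv₀, w, hw⟩
    rw [length_eq_count hl] at hw
    rw [hl e] at hs1
    have hfl : ⌊t⌋ = (w.edges.length : ℤ) := by
      rw [Int.floor_eq_iff]
      constructor
      · push_cast; linarith
      · push_cast; linarith
    have hnat : ⌊t⌋.toNat = w.edges.length := by omega
    have hfr : Int.fract t = s := by
      rw [Int.fract, hfl]
      push_cast
      linarith
    exact ⟨(e, x), ⟨hx, v₀, hv₀, w, hnat ▸ rfl⟩, by rw [hfr]⟩
  · rintro ⟨⟨e', x'⟩, ⟨hx, v₀, hv₀, w, hw⟩, heq⟩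
    obtain ⟨rfl, rfl, rfl⟩ : e' = e ∧ x' = x ∧ Int.fract t = s := by
      simpa [Prod.ext_iff] using heq
    refine ⟨hx, Int.fract_nonneg t, by rw [hl e']; exact Int.fract_lt_one t, v₀, hv₀, w, ?_⟩
    rw [length_eq_count hl, hw, Int.fract]
    have hcast : (⌊t⌋.toNat : ℝ) = (⌊t⌋ : ℝ) := by
      have h0 := Int.floor_nonneg.mpr ht
      exact_mod_cast congrArg (fun z : ℤ => (z : ℝ)) (Int.toNat_of_nonneg h0)
    rw [hcast]
    ring

lemma Npts_eq {l : E → ℝ} (hl : ∀ e, l e = 1) {t : ℝ} (ht : 0 ≤ t) :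
    Npts ends l S t = (Qset ends S (⌊t⌋.toNat)).ncard := by
  rw [Npts, points_eq hl ht]
  apply Set.ncard_image_of_injective
  intro a b hab
  simp only [Prod.mk.injEq] at hab
  exact Prod.ext hab.1 hab.2.1

lemma zmod2_cases : ∀ p q : ZMod 2, p = q ∨ p = q + 1 := by decide
lemma zmod2_add2 : ∀ p : ZMod 2, p + 1 + 1 = p := by decide

lemma ncard_Qpar_flip [Finite E] [Finite V] (hnd : ∀ e, ¬ (ends e).IsDiag) (p : ZMod 2) :
    (Qpar ends S p).ncard = (Qpar ends S (p + 1)).ncard := by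
  classical
  set φ : E × V → E × V :=
    fun q => (q.1, if h : q.2 ∈ ends q.1 then Sym2.Mem.other h else q.2) with hφ
  have hmaps : ∀ q ∈ Qpar ends S p, φ q ∈ Qpar ends S (p + 1) := by
    rintro ⟨e, x⟩ ⟨hx, v₀, hv₀, w, hw⟩
    simp only [hφ, Set.mem_setOf_eq, Qpar, dif_pos hx]
    have hspec := Sym2.other_spec hx
    refine ⟨Sym2.other_mem hx, v₀, hv₀,
      wappend w (.cons e hspec.symm (.nil _)), ?_⟩
    rw [wappend_edges, List.length_append]
    push_cast
    simp [MGWalk.edges, hw]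
  have hinj : Set.InjOn φ (Qpar ends S p) := by
    rintro ⟨e₁, x₁⟩ h₁ ⟨e₂, x₂⟩ h₂ heq
    simp only [hφ, Prod.mk.injEq, dif_pos h₁.1, dif_pos h₂.1] at heq
    obtain ⟨he, hy⟩ := heq
    subst he
    have hs₁ := Sym2.other_spec h₁.1
    have hs₂ := Sym2.other_spec h₂.1
    rw [hy] at hs₁
    have : s(x₁, Sym2.Mem.other h₂.1) = s(x₂, Sym2.Mem.other h₂.1) := by rw [hs₁, hs₂]
    rw [Sym2.eq_iff] at this
    have hne := ends_ne (ends := ends) hnd hs₂.symm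
    rcases this with ⟨h1, _⟩ | ⟨h1, h2⟩
    · exact Prod.ext rfl h1
    · exact absurd h2.symm hne
  have hsurj : Qpar ends S (p + 1) ⊆ φ '' Qpar ends S p := by
    rintro ⟨e, y⟩ ⟨hy, v₀, hv₀, w, hw⟩
    have hspec := Sym2.other_spec hy
    set x := Sym2.Mem.other hy with hx
    have hxe : x ∈ ends e := Sym2.other_mem hy
    have hyx : y ≠ x := ends_ne hnd hspec.symm
    refine ⟨(e, x), ⟨hxe, v₀, hv₀, wappend w (.cons e hspec.symm (.nil _)), ?_⟩, ?_⟩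
    · rw [wappend_edges, List.length_append]
      push_cast
      simp [MGWalk.edges, hw]
      rw [zmod2_add2]
    · have hs₂ := Sym2.other_spec hxe
      have h3 : s(x, Sym2.Mem.other hxe) = s(y, x) := by rw [hs₂, ← hspec]
      rw [Sym2.eq_iff] at h3
      have hoth : Sym2.Mem.other hxe = y := by
        rcases h3 with ⟨h1, h2⟩ | ⟨h1, h2⟩
        · exact absurd h1.symm hyx
        · exact h2
      simp only [hφ, dif_pos hxe]
      rw [hoth]
  have himg : φ '' Qpar ends S p = Qpar ends S (p + 1) :=
    Set.Subset.antisymm (Set.image_subset_iff.mpr hmaps) hsurj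
  rw [← himg, Set.ncard_image_of_injOn hinj]

lemma ncard_Qpar_const [Finite E] [Finite V] (hnd : ∀ e, ¬ (ends e).IsDiag) (p q : ZMod 2) :
    (Qpar ends S p).ncard = (Qpar ends S q).ncard := by
  rcases zmod2_cases p q with h | h
  · rw [h]
  · rw [h, ← ncard_Qpar_flip hnd q]

lemma npts_const_from_char [Finite E] [Finite V] (hnd : ∀ e, ¬ (ends e).IsDiag)
    {l : E → ℝ} (hl : ∀ e, l e = 1) {B : ℕ}
    (hchar : ∀ n, B ≤ n → Qset ends S n = Qpar ends S (n : ZMod 2)) :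
    ∀ t : ℝ, (B : ℝ) ≤ t → Npts ends l S t = (Qpar ends S 0).ncard := by
  intro t ht
  have ht0 : (0:ℝ) ≤ t := le_trans (by positivity) ht
  have hfl : (B : ℤ) ≤ ⌊t⌋ := by
    rw [Int.le_floor]; push_cast; exact ht
  have hn : B ≤ ⌊t⌋.toNat := by omega
  rw [Npts_eq hl ht0, hchar _ hn, ncard_Qpar_const hnd _ 0]

lemma stab_from_char [Finite E] [Finite V] (hnd : ∀ e, ¬ (ends e).IsDiag)
    {l : E → ℝ} (hl : ∀ e, l e = 1) {B : ℕ}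
    (hchar : ∀ n, B ≤ n → Qset ends S n = Qpar ends S (n : ZMod 2)) :
    IsStabBound ends l S (B : ℝ) := by
  refine ⟨by positivity, ?_⟩
  intro t ht
  rw [npts_const_from_char hnd hl hchar t ht,
    npts_const_from_char hnd hl hchar (B : ℝ) le_rfl]

lemma stabTime_le_of_bound {l : E → ℝ} {T : ℝ} (h : IsStabBound ends l S T) :
    stabTime ends l S ≤ T :=
  csInf_le ⟨0, fun T' hT' => hT'.1⟩ h

lemma stabTime_ge {l : E → ℝ} {t₁ t₂ : ℝ} (h12 : t₁ ≤ t₂)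
    (hne : Npts ends l S t₁ ≠ Npts ends l S t₂) {T₀ : ℝ} (hT₀ : IsStabBound ends l S T₀) :
    t₁ ≤ stabTime ends l S := by
  apply le_csInf ⟨T₀, by exact hT₀⟩
  intro T hT
  by_contra hc
  push_neg at hc
  exact hne (by rw [hT.2 t₁ (le_of_lt hc), hT.2 t₂ (le_trans (le_of_lt hc) h12)])

end GroupC
section GroupD
open MGWalk
variable {E : Type}

lemma dist_le_card [Fintype E] {V : Type} [Finite V] {ends : E → Sym2 V}
    (hconn : ∀ a b : V, Nonempty (MGWalk ends a b)) (hnd : ∀ e, ¬(ends e).IsDiag)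
    (v₀ x : V) : ∃ w : MGWalk ends v₀ x, w.edges.length ≤ Fintype.card E := by
  classical
  set m := Fintype.card E with hm
  have hex : ∀ y : V, ∃ k, ∃ w : MGWalk ends y v₀, w.edges.length = k :=
    fun y => ⟨_, (hconn y v₀).some, rfl⟩
  set d : V → ℕ := fun y => Nat.find (hex y) with hdd
  have hd : ∀ y, ∃ w : MGWalk ends y v₀, w.edges.length = d y := fun y => Nat.find_spec (hex y)
  have hdle : ∀ y k, (∃ w : MGWalk ends y v₀, w.edges.length = k) → d y ≤ k :=
    fun y k h => Nat.find_le h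
  have hd0 : d v₀ = 0 := Nat.le_zero.mp (hdle v₀ 0 ⟨.nil v₀, rfl⟩)
  have hstep : ∀ y, y ≠ v₀ → ∃ (e : E) (z : V), ends e = s(y, z) ∧ d z < d y := by
    intro y hy
    obtain ⟨w, hw⟩ := hd y
    cases w with
    | nil => exact absurd rfl hy
    | cons e h t =>
        refine ⟨e, _, h, ?_⟩
        have h1 : d _ ≤ t.edges.length := hdle _ _ ⟨t, rfl⟩
        have h2 : t.edges.length + 1 = d y := by
          simpa [MGWalk.edges] using hw
        omega
  -- cardinality of V
  have hcardV : (Set.univ : Set V).ncard ≤ m + 1 := by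
    by_cases htriv : ∀ y : V, y = v₀
    · have : (Set.univ : Set V) = {v₀} := by
        ext y; simp [htriv y]
      rw [this, Set.ncard_singleton]; omega
    · push_neg at htriv
      obtain ⟨y₁, hy₁⟩ := htriv
      have hEne : Nonempty E := ⟨(hstep y₁ hy₁).choose⟩
      set F : V → E := fun y =>
        if h : y ≠ v₀ then (hstep y h).choose else Classical.arbitrary E with hF
      have hFspec : ∀ y (h : y ≠ v₀), ∃ z, ends (F y) = s(y, z) ∧ d z < d y := by
        intro y h
        rw [hF]; simp only [dif_pos h]
        exact (hstep y h).choose_spec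
      have hinj : Set.InjOn F (Set.univ \ {v₀}) := by
        rintro a ⟨-, ha⟩ b ⟨-, hb⟩ hab
        simp only [Set.mem_singleton_iff] at ha hb
        obtain ⟨za, hza, hdza⟩ := hFspec a ha
        obtain ⟨zb, hzb, hdzb⟩ := hFspec b hb
        by_contra hne
        rw [hab] at hza
        rw [hza, Sym2.eq_iff] at hzb
        rcases hzb with ⟨h1, h2⟩ | ⟨h1, h2⟩
        · exact hne h1
        · rw [← h1] at hdzb; rw [h2] at hdza; omega
      have h1 : (Set.univ \ {v₀} : Set V).ncard ≤ (Set.univ : Set E).ncard :=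
        Set.ncard_le_ncard_of_injOn F (fun a _ => Set.mem_univ _) hinj (Set.toFinite _)
      have h2 : (Set.univ : Set E).ncard = m := by
        rw [Set.ncard_univ, Nat.card_eq_fintype_card]
      have h3 : (Set.univ \ {v₀} : Set V).ncard + 1 = (Set.univ : Set V).ncard :=
        Set.ncard_diff_singleton_add_one (Set.mem_univ v₀) (Set.toFinite _)
      omega
  -- reachability layers
  set R : ℕ → Set V := fun k => {y | ∃ w : MGWalk ends y v₀, w.edges.length ≤ k} with hR
  have hRmono : ∀ k, R k ⊆ R (k+1) := by
    rintro k y ⟨w, hw⟩; exact ⟨w, by omega⟩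
  have hstab : ∀ k, R k = R (k+1) → ∀ y, y ∈ R k := by
    intro k hk y
    suffices h : ∀ j y, d y = j → y ∈ R k from h (d y) y rfl
    intro j
    induction j using Nat.strong_induction_on with
    | _ j ih =>
      intro y hdy
      by_cases hj : j ≤ k
      · obtain ⟨w, hw⟩ := hd y
        exact ⟨w, by omega⟩
      · have hy : y ≠ v₀ := fun h => by rw [h, hd0] at hdy; omega
        obtain ⟨e, z, hez, hdz⟩ := hstep y hy
        have hz : z ∈ R k := ih (d z) (by omega) z rfl
        obtain ⟨wz, hwz⟩ := hz
        have hy' : y ∈ R (k+1) := ⟨.cons e hez wz, by simp [MGWalk.edges]; omega⟩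
        rwa [← hk] at hy'
  have hgrow : ∀ k, R k ≠ Set.univ → k + 1 ≤ (R k).ncard := by
    intro k
    induction k with
    | zero =>
        intro _
        have hv : v₀ ∈ R 0 := ⟨.nil v₀, by simp [MGWalk.edges]⟩
        have := (Set.ncard_pos (Set.toFinite (R 0))).mpr ⟨v₀, hv⟩
        omega
    | succ k ih =>
        intro hne
        have hk_ne : R k ≠ Set.univ := by
          intro h
          apply hne
          apply Set.eq_univ_of_univ_subset
          rw [← h]
          exact hRmono k
        have h1 := ih hk_ne
        have hne2 : R k ≠ R (k+1) := by
          intro h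
          apply hk_ne
          exact Set.eq_univ_of_forall (hstab k h)
        have hss : R k ⊂ R (k+1) := ⟨hRmono k, fun h => hne2 (subset_antisymm (hRmono k) h)⟩
        have := Set.ncard_lt_ncard hss (Set.toFinite _)
        omega
  have hRm : R m = Set.univ := by
    by_contra hne
    have h1 := hgrow m hne
    have hss : R m ⊂ Set.univ := ⟨Set.subset_univ _, fun h => hne (subset_antisymm (Set.subset_univ _) h)⟩
    have h2 := Set.ncard_lt_ncard hss (Set.toFinite _)
    omega
  have hx : x ∈ R m := hRm ▸ Set.mem_univ x
  obtain ⟨w, hw⟩ := hx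
  exact ⟨wreverse w, by rw [wreverse_edges, List.length_reverse]; exact hw⟩

lemma path_char [Fintype E] {V : Type} {ends : E → Sym2 V} {S : Set V}
    (hsys : IsDPSystem ends S) (hac : IsAcyclicG ends) (hdeg : ∀ x, degree ends x ≤ 2) :
    ∀ n, Fintype.card E ≤ n → Qset ends S n = Qpar ends S (n : ZMod 2) := by
  obtain ⟨hfin, hnd, hconn, hS⟩ := hsys
  haveI := hfin
  intro n hn
  ext ⟨e, x⟩
  constructor
  · rintro ⟨hx, v₀, hv₀, w, hw⟩
    exact ⟨hx, v₀, hv₀, w, by rw [hw]⟩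
  · rintro ⟨hx, v₀, hv₀, w, hw⟩
    obtain ⟨w₀, hw₀⟩ := dist_le_card hconn hnd v₀ x
    have hpar : (n : ZMod 2) = (w₀.edges.length : ZMod 2) := by
      rw [parity_unique hnd hdeg hac w₀ w, hw]
    obtain ⟨e', y, hey⟩ := exists_incident hconn hnd e x
    obtain ⟨w', hw'⟩ := pump_parity e' y hey w₀ (le_trans hw₀ hn) hpar
    exact ⟨hx, v₀, hv₀, w', hw'⟩

lemma path_stab_le [Fintype E] {V : Type} {ends : E → Sym2 V} {S : Set V}
    {l : E → ℝ} (hl : ∀ e, l e = 1)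
    (hsys : IsDPSystem ends S) (hac : IsAcyclicG ends) (hdeg : ∀ x, degree ends x ≤ 2) :
    stabTime ends l S ≤ (Fintype.card E : ℝ) := by
  haveI := hsys.1
  exact stabTime_le_of_bound (stab_from_char hsys.2.1 hl (path_char hsys hac hdeg))

end GroupD
section GroupE
open MGWalk

/-- generic potential bound for walks -/
lemma pot_bound {E V : Type} {ends : E → Sym2 V} (pot : V → ℤ)
    (hpot : ∀ (e : E) (x y : V), ends e = s(x, y) → pot x - pot y ≤ 1 ∧ pot y - pot x ≤ 1) :
    ∀ {a b : V} (w : MGWalk ends a b),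
      pot a - pot b ≤ (w.edges.length : ℤ) ∧ pot b - pot a ≤ (w.edges.length : ℤ)
  | _, _, .nil _ => by simp [MGWalk.edges]
  | a, b, .cons e h t => by
      obtain ⟨h1, h2⟩ := hpot e _ _ h
      obtain ⟨h3, h4⟩ := pot_bound pot hpot t
      simp only [MGWalk.edges, List.length_cons]
      push_cast
      omega

/-- generic decomposition of a walk at an edge occurrence -/
lemma decompose {E V : Type} {ends : E → Sym2 V} :
    ∀ {a b : V} (w : MGWalk ends a b) (f : E), f ∈ w.edges →
    ∃ (x y : V) (w₁ : MGWalk ends a x) (w₂ : MGWalk ends y b),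
      ends f = s(x, y) ∧ w.edges.length = w₁.edges.length + 1 + w₂.edges.length
  | _, _, .nil _, f, hf => by simp [MGWalk.edges] at hf
  | a, b, .cons e h t, f, hf => by
      by_cases hef : f = e
      · subst hef
        exact ⟨a, _, .nil a, t, h, by simp [MGWalk.edges]; omega⟩
      · have hft : f ∈ t.edges := by
          rcases List.mem_cons.mp hf with h1 | h1
          · exact absurd h1 hef
          · exact h1
        obtain ⟨x, y, w₁, w₂, hxy, hlen⟩ := decompose t f hft
        exact ⟨x, y, .cons e h w₁, w₂, hxy, by simp [MGWalk.edges]; omega⟩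

variable (M : ℕ)

def bV (k : ℕ) : Fin (M + 6) := ⟨k % (M + 6), Nat.mod_lt _ (by omega)⟩

lemma bV_val {k : ℕ} (h : k < M + 6) : (bV M k).val = k := Nat.mod_eq_of_lt h

def bEnds : Fin (M + 6) → Sym2 (Fin (M + 6)) := fun e =>
  if e.val = 0 then s(bV M 0, bV M 1)
  else if e.val = 1 then s(bV M 1, bV M 2)
  else if e.val = 2 then s(bV M 2, bV M 0)
  else s(bV M (e.val - 1), bV M e.val)

lemma bEnds_cases (e : Fin (M + 6)) :
    (e.val = 0 ∧ bEnds M e = s(bV M 0, bV M 1)) ∨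
    (e.val = 1 ∧ bEnds M e = s(bV M 1, bV M 2)) ∨
    (e.val = 2 ∧ bEnds M e = s(bV M 2, bV M 0)) ∨
    (3 ≤ e.val ∧ bEnds M e = s(bV M (e.val - 1), bV M e.val)) := by
  rw [bEnds]
  split_ifs with h0 h1 h2
  · exact Or.inl ⟨h0, rfl⟩
  · exact Or.inr (Or.inl ⟨h1, rfl⟩)
  · exact Or.inr (Or.inr (Or.inl ⟨h2, rfl⟩))
  · exact Or.inr (Or.inr (Or.inr ⟨by omega, rfl⟩))

lemma bEnds_vals {e x y : Fin (M + 6)} (h : bEnds M e = s(x, y)) :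
    ∃ a b : ℕ, ((x.val = a ∧ y.val = b) ∨ (x.val = b ∧ y.val = a)) ∧
      ((e.val = 0 ∧ a = 0 ∧ b = 1) ∨ (e.val = 1 ∧ a = 1 ∧ b = 2) ∨
       (e.val = 2 ∧ a = 2 ∧ b = 0) ∨
       (3 ≤ e.val ∧ e.val < M + 6 ∧ a = e.val - 1 ∧ b = e.val)) := by
  have hlt := e.isLt
  rcases bEnds_cases M e with ⟨he, hs⟩ | ⟨he, hs⟩ | ⟨he, hs⟩ | ⟨he, hs⟩ <;>
    rw [hs, Sym2.eq_iff] at h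
  · refine ⟨0, 1, ?_, Or.inl ⟨he, rfl, rfl⟩⟩
    rcases h with ⟨h1, h2⟩ | ⟨h1, h2⟩
    · exact Or.inl ⟨by rw [← h1, bV_val M (by omega)], by rw [← h2, bV_val M (by omega)]⟩
    · exact Or.inr ⟨by rw [← h2, bV_val M (by omega)], by rw [← h1, bV_val M (by omega)]⟩
  · refine ⟨1, 2, ?_, Or.inr (Or.inl ⟨he, rfl, rfl⟩)⟩
    rcases h with ⟨h1, h2⟩ | ⟨h1, h2⟩
    · exact Or.inl ⟨by rw [← h1, bV_val M (by omega)], by rw [← h2, bV_val M (by omega)]⟩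
    · exact Or.inr ⟨by rw [← h2, bV_val M (by omega)], by rw [← h1, bV_val M (by omega)]⟩
  · refine ⟨2, 0, ?_, Or.inr (Or.inr (Or.inl ⟨he, rfl, rfl⟩))⟩
    rcases h with ⟨h1, h2⟩ | ⟨h1, h2⟩
    · exact Or.inl ⟨by rw [← h1, bV_val M (by omega)], by rw [← h2, bV_val M (by omega)]⟩
    · exact Or.inr ⟨by rw [← h2, bV_val M (by omega)], by rw [← h1, bV_val M (by omega)]⟩
  · refine ⟨e.val - 1, e.val, ?_, Or.inr (Or.inr (Or.inr ⟨he, hlt, rfl, rfl⟩))⟩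
    rcases h with ⟨h1, h2⟩ | ⟨h1, h2⟩
    · exact Or.inl ⟨by rw [← h1, bV_val M (by omega)], by rw [← h2, bV_val M (by omega)]⟩
    · exact Or.inr ⟨by rw [← h2, bV_val M (by omega)], by rw [← h1, bV_val M (by omega)]⟩

lemma bEnds_nondiag : ∀ e, ¬ (bEnds M e).IsDiag := by
  intro e hd
  obtain ⟨x, y, hxy⟩ : ∃ x y, bEnds M e = s(x, y) := by
    obtain ⟨⟨x, y⟩, h⟩ := Quot.exists_rep (bEnds M e)
    exact ⟨x, y, h.symm⟩
  rw [hxy, Sym2.mk_isDiag_iff] at hd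
  obtain ⟨a, b, hv, hc⟩ := bEnds_vals M hxy
  have := congrArg Fin.val hd
  omega

/-- parity of edges: every edge flips the mod-2 vertex label except edge 2 -/
lemma bEnds_parity {e x y : Fin (M + 6)} (h : bEnds M e = s(x, y)) :
    (x.val + y.val) % 2 = if e.val = 2 then 0 else 1 := by
  obtain ⟨a, b, hv, hc⟩ := bEnds_vals M h
  rcases hv with ⟨h1, h2⟩ | ⟨h1, h2⟩ <;>
    rcases hc with ⟨he, ha, hb⟩ | ⟨he, ha, hb⟩ | ⟨he, ha, hb⟩ | ⟨he, hm, ha, hb⟩ <;>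
    split_ifs <;> omega

/-- any walk either uses edge 2, or its length has the parity given by endpoint labels -/
lemma bpar_or : ∀ {a b : Fin (M + 6)} (w : MGWalk (bEnds M) a b),
    ((⟨2, by omega⟩ : Fin (M + 6)) ∈ w.edges) ∨
      (w.edges.length + a.val + b.val) % 2 = 0
  | _, _, .nil _ => by simp [MGWalk.edges]; omega
  | a, b, .cons e h t => by
      rename_i u
      by_cases he2 : e = ⟨2, by omega⟩
      · subst he2
        exact Or.inl (List.mem_cons_self)
      · rcases bpar_or t with hmem | hpar
        · exact Or.inl (List.mem_cons_of_mem _ hmem)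
        · right
          have hne : e.val ≠ 2 := fun hc => he2 (Fin.ext hc)
          have hp := bEnds_parity M h
          rw [if_neg hne] at hp
          rw [show (MGWalk.cons e h t).edges = e :: t.edges from rfl]
          simp only [List.length_cons]
          omega

/-- potentials: distance to vertex 2 and to vertex 0 along the graph -/
def ψpot (x : Fin (M + 6)) : ℤ :=
  if x.val = 0 then 1 else if x.val = 1 then 1 else (x.val : ℤ) - 2

def δpot (x : Fin (M + 6)) : ℤ :=
  if x.val = 0 then 0 else if x.val ≤ 2 then 1 else (x.val : ℤ) - 1

lemma ψpot_lip : ∀ (e : Fin (M+6)) (x y : Fin (M + 6)), bEnds M e = s(x, y) →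
    ψpot M x - ψpot M y ≤ 1 ∧ ψpot M y - ψpot M x ≤ 1 := by
  intro e x y h
  obtain ⟨a, b, hv, hc⟩ := bEnds_vals M h
  rw [ψpot, ψpot]
  rcases hv with ⟨h1, h2⟩ | ⟨h1, h2⟩ <;>
    rcases hc with ⟨he, ha, hb⟩ | ⟨he, ha, hb⟩ | ⟨he, ha, hb⟩ | ⟨he, hm, ha, hb⟩ <;>
    subst ha <;> subst hb <;> split_ifs <;> omega

lemma δpot_lip : ∀ (e : Fin (M+6)) (x y : Fin (M + 6)), bEnds M e = s(x, y) →
    δpot M x - δpot M y ≤ 1 ∧ δpot M y - δpot M x ≤ 1 := by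
  intro e x y h
  obtain ⟨a, b, hv, hc⟩ := bEnds_vals M h
  rw [δpot, δpot]
  rcases hv with ⟨h1, h2⟩ | ⟨h1, h2⟩ <;>
    rcases hc with ⟨he, ha, hb⟩ | ⟨he, ha, hb⟩ | ⟨he, ha, hb⟩ | ⟨he, hm, ha, hb⟩ <;>
    subst ha <;> subst hb <;> split_ifs <;> omega

lemma bEnds_two : bEnds M ⟨2, by omega⟩ = s(bV M 2, bV M 0) := by
  rw [bEnds]
  norm_num

/-- there is no closed walk of length 2M+7 at the top vertex -/
lemma no_odd_closed (w : MGWalk (bEnds M) (bV M (M+5)) (bV M (M+5))) :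
    w.edges.length ≠ 2*M+7 := by
  intro hw
  have hval : (bV M (M+5)).val = M + 5 := bV_val M (by omega)
  rcases bpar_or M w with hmem | hpar
  · obtain ⟨x, y, w₁, w₂, hxy, hlen⟩ := decompose w _ hmem
    rw [bEnds_two, Sym2.eq_iff] at hxy
    have hψv : ψpot M (bV M (M+5)) = (M : ℤ) + 3 := by
      rw [ψpot, hval, if_neg (by omega), if_neg (by omega)]; omega
    have hδv : δpot M (bV M (M+5)) = (M : ℤ) + 4 := by
      rw [δpot, hval, if_neg (by omega), if_neg (by omega)]; omega
    have hψ2 : ψpot M (bV M 2) = 0 := by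
      rw [ψpot, bV_val M (by omega), if_neg (by omega), if_neg (by omega)]; omega
    have hδ0 : δpot M (bV M 0) = 0 := by
      rw [δpot, bV_val M (by omega), if_pos rfl]
    rcases hxy with ⟨h1, h2⟩ | ⟨h1, h2⟩
    · -- x = bV 2, y = bV 0
      subst h1; subst h2
      have hb1 := (pot_bound (ψpot M) (ψpot_lip M) w₁).1
      have hb2 := (pot_bound (δpot M) (δpot_lip M) w₂).2
      rw [hψv, hψ2] at hb1
      rw [hδv, hδ0] at hb2
      omega
    · -- x = bV 0, y = bV 2
      subst h1; subst h2
      have hb1 := (pot_bound (δpot M) (δpot_lip M) w₁).1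
      have hb2 := (pot_bound (ψpot M) (ψpot_lip M) w₂).2
      rw [hδv, hδ0] at hb1
      rw [hψv, hψ2] at hb2
      omega
  · omega

end GroupE
section GroupF
open MGWalk
variable (M : ℕ)

lemma cast_edges {E V : Type} {ends : E → Sym2 V} {a b b' : V} (h : b = b')
    (w : MGWalk ends a b) : (h ▸ w).edges = w.edges := by subst h; rfl

lemma bEnds_zero : bEnds M ⟨0, by omega⟩ = s(bV M 0, bV M 1) := by
  rw [bEnds]
  norm_num

lemma bEnds_one : bEnds M ⟨1, by omega⟩ = s(bV M 1, bV M 2) := by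
  rw [bEnds]
  norm_num

lemma bEnds_handle (j : ℕ) (h3 : 3 ≤ j) (hlt : j < M + 6) :
    bEnds M ⟨j, hlt⟩ = s(bV M (j - 1), bV M j) := by
  have hval : (⟨j, hlt⟩ : Fin (M + 6)).val = j := rfl
  rw [bEnds, hval, if_neg (by omega), if_neg (by omega), if_neg (by omega)]

def bUpAux : (k : ℕ) → (2 + k < M + 6) → MGWalk (bEnds M) (bV M 2) (bV M (2 + k))
  | 0, _ => .nil _
  | k+1, h =>
      wappend (bUpAux k (by omega))
        (.cons ⟨2+k+1, by omega⟩ (bEnds_handle M (2+k+1) (by omega) (by omega)) (.nil _))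

lemma bUpAux_len : ∀ (k : ℕ) (h : 2 + k < M + 6), (bUpAux M k h).edges.length = k
  | 0, _ => rfl
  | k+1, h => by
      simp [bUpAux, MGWalk.edges, bUpAux_len k (by omega : 2 + k < M + 6)]

def bTri : MGWalk (bEnds M) (bV M 2) (bV M 2) :=
  .cons ⟨1, by omega⟩ (by rw [bEnds_one M]; exact Sym2.eq_swap)
    (.cons ⟨0, by omega⟩ (by rw [bEnds_zero M]; exact Sym2.eq_swap)
      (.cons ⟨2, by omega⟩ (by rw [bEnds_two M]; exact Sym2.eq_swap)
        (.nil _)))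

lemma bTri_len : (bTri M).edges.length = 3 := rfl

lemma bToX (x : Fin (M + 6)) :
    ∃ w : MGWalk (bEnds M) (bV M 2) x, w.edges.length ≤ M + 6 := by
  rcases Nat.lt_or_ge x.val 2 with hx | hx
  · by_cases h0 : x.val = 0
    · have hx0 : bV M 0 = x := Fin.ext (by rw [bV_val M (by omega), h0])
      exact ⟨.cons ⟨2, by omega⟩ (by rw [bEnds_two M, hx0]) (.nil x),
        by simp [MGWalk.edges]⟩
    · have hx1 : bV M 1 = x := Fin.ext (by rw [bV_val M (by omega)]; omega)
      exact ⟨.cons ⟨1, by omega⟩ (by rw [bEnds_one M, hx1]; exact Sym2.eq_swap) (.nil x),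
        by simp [MGWalk.edges]⟩
  · have hx2 : bV M (2 + (x.val - 2)) = x := Fin.ext (by rw [bV_val M (by omega)]; omega)
    refine ⟨hx2 ▸ bUpAux M (x.val - 2) (by omega), ?_⟩
    rw [cast_edges, bUpAux_len]
    omega

lemma bconn : ∀ a b : Fin (M + 6), Nonempty (MGWalk (bEnds M) a b) := by
  intro a b
  obtain ⟨wa, -⟩ := bToX M a
  obtain ⟨wb, -⟩ := bToX M b
  exact ⟨wappend (wreverse wa) wb⟩

lemma big_reach (n : ℕ) (hn : 2*M + 12 ≤ n) (x : Fin (M + 6)) :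
    ∃ w : MGWalk (bEnds M) (bV M (M + 5)) x, w.edges.length = n := by
  obtain ⟨wx, hwx⟩ := bToX M x
  have hveq : bV M (2 + (M + 3)) = bV M (M + 5) := congrArg (bV M) (by omega)
  set down := wreverse (hveq ▸ bUpAux M (M + 3) (by omega)) with hdown
  have hdlen : down.edges.length = M + 3 := by
    rw [hdown, wreverse_edges, List.length_reverse, cast_edges, bUpAux_len]
  set w₁ := wappend down wx with hw₁
  set w₂ := wappend down (wappend (bTri M) wx) with hw₂
  have hl₁ : w₁.edges.length = M + 3 + wx.edges.length := by
    rw [hw₁, wappend_edges, List.length_append, hdlen]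
  have hl₂ : w₂.edges.length = M + 3 + (3 + wx.edges.length) := by
    rw [hw₂, wappend_edges, wappend_edges, List.length_append, List.length_append,
      hdlen, bTri_len]
  obtain ⟨e', y, hey⟩ := exists_incident (bconn M) (bEnds_nondiag M) ⟨0, by omega⟩ x
  rcases Nat.even_or_odd (n + w₁.edges.length) with hpar | hpar
  · refine pump_parity e' y hey w₁ (by omega) ?_
    rw [ZMod.natCast_eq_natCast_iff']
    obtain ⟨j, hj⟩ := hpar
    omega
  · refine pump_parity e' y hey w₂ (by omega) ?_
    rw [ZMod.natCast_eq_natCast_iff']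
    obtain ⟨j, hj⟩ := hpar
    omega

lemma big_char : ∀ n, 2*M + 12 ≤ n →
    Qset (bEnds M) {bV M (M + 5)} n = Qpar (bEnds M) {bV M (M + 5)} (n : ZMod 2) := by
  intro n hn
  ext ⟨e, x⟩
  constructor
  · rintro ⟨hx, v₀, hv₀, w, hw⟩
    exact ⟨hx, v₀, hv₀, w, by rw [hw]⟩
  · rintro ⟨hx, -⟩
    exact ⟨hx, bV M (M + 5), rfl, big_reach M n hn x⟩

lemma floor_toNat_natCast (k : ℕ) : (⌊((k : ℕ) : ℝ)⌋).toNat = k := by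
  rw [Int.floor_natCast]
  exact Int.toNat_natCast k

lemma big_lt {l : Fin (M + 6) → ℝ} (hl : ∀ e, l e = 1) :
    Npts (bEnds M) l {bV M (M + 5)} ((2*M + 7 : ℕ) : ℝ)
      < Npts (bEnds M) l {bV M (M + 5)} ((2*M + 12 : ℕ) : ℝ) := by
  rw [Npts_eq hl (by positivity), Npts_eq hl (by positivity),
    floor_toNat_natCast, floor_toNat_natCast]
  apply Set.ncard_lt_ncard _ (Set.toFinite _)
  constructor
  · rintro ⟨e, x⟩ ⟨hx, -⟩
    exact ⟨hx, bV M (M + 5), rfl, big_reach M _ le_rfl x⟩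
  · intro hcon
    have hmem : ((⟨M + 5, by omega⟩ : Fin (M + 6)), bV M (M + 5)) ∈
        Qset (bEnds M) {bV M (M + 5)} (2*M + 12) := by
      have hx : bV M (M + 5) ∈ bEnds M ⟨M + 5, by omega⟩ := by
        rw [bEnds_handle M (M + 5) (by omega) (by omega)]
        exact Sym2.mem_mk_right _ _
      exact ⟨hx, bV M (M + 5), rfl, big_reach M _ le_rfl _⟩
    obtain ⟨-, v₀, hv₀, w, hw⟩ := hcon hmem
    rw [Set.mem_singleton_iff] at hv₀
    subst hv₀
    exact no_odd_closed M w hw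

end GroupF

/-- for every real `C` there is a finite edge set `E` of unit-length
edges and a DP-system assembled from `E` whose stabilization time exceeds by more
than `C` the stabilization time of every DP-system on a linear (path) metric
graph assembled from `E`. -/
theorem stmt14 (C : ℝ) :
    ∃ (E : Type) (_ : Fintype E) (l : E → ℕ),
      (∀ e : E, l e = 1) ∧
      ∃ (V : Type) (ends : E → Sym2 V) (S : Set V),
        IsDPSystem ends S ∧
        ∀ (V' : Type) (ends' : E → Sym2 V') (S' : Set V'),
          IsDPSystem ends' S' → IsAcyclicG ends' →
          (∀ x : V', degree ends' x ≤ 2) →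
          stabTime ends' (fun e => (l e : ℝ)) S' + C
            < stabTime ends (fun e => (l e : ℝ)) S := by
  set M := ⌈C⌉₊ with hM
  refine ⟨Fin (M + 6), inferInstance, fun _ => 1, fun _ => rfl,
    Fin (M + 6), bEnds M, {bV M (M + 5)},
    ⟨inferInstance, bEnds_nondiag M, bconn M, Set.singleton_nonempty _⟩, ?_⟩
  intro V' ends' S' hsys hac hdeg
  show stabTime ends' (fun _ => ((1 : ℕ) : ℝ)) S' + C
      < stabTime (bEnds M) (fun _ => ((1 : ℕ) : ℝ)) {bV M (M + 5)}
  have hl : ∀ e : Fin (M + 6), (fun _ : Fin (M + 6) => ((1 : ℕ) : ℝ)) e = 1 :=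
    fun _ => by norm_num
  have hpath : stabTime ends' (fun _ => ((1 : ℕ) : ℝ)) S' ≤ (Fintype.card (Fin (M + 6)) : ℝ) :=
    path_stab_le hl hsys hac hdeg
  rw [Fintype.card_fin] at hpath
  have hbound : IsStabBound (bEnds M) (fun _ => ((1 : ℕ) : ℝ)) {bV M (M + 5)}
      ((2*M + 12 : ℕ) : ℝ) :=
    stab_from_char (bEnds_nondiag M) hl (big_char M)
  have hlt := big_lt M hl
  have h12 : ((2*M + 7 : ℕ) : ℝ) ≤ ((2*M + 12 : ℕ) : ℝ) := Nat.cast_le.mpr (by omega)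
  have hge : ((2*M + 7 : ℕ) : ℝ) ≤ stabTime (bEnds M) (fun _ => ((1 : ℕ) : ℝ)) {bV M (M + 5)} :=
    stabTime_ge h12 (Nat.ne_of_lt hlt) hbound
  have hC : C ≤ (M : ℝ) := Nat.le_ceil C
  have e1 : ((M + 6 : ℕ) : ℝ) = (M : ℝ) + 6 := by push_cast; ring
  have e2 : ((2*M + 7 : ℕ) : ℝ) = 2*(M : ℝ) + 7 := by push_cast; ring
  rw [e1] at hpath
  rw [e2] at hge
  linarith
end
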